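/- arXiv:1506.02829 — 5 statements merged into one kernel-verified Lean document; each statement's English description precedes it below -/
import Mathlib

section
/- For r = min(a,l) and s = max(a,l), the generating function for plane partitions fitting inside an l × a rectangle equals ∏_{j=r}^{s} (1/(1-x^j))^r · ∏_{i=1}^{r-1} (1/(1-x^i))^i · (1/(1-x^{s+i}))^{r-i}. -/
open Finset


open PowerSeries

/-- Number of plane partitions of `k` fitting inside an `l × a` rectangle:
`l × a` arrays of nonnegative integers, weakly decreasing along rows and
columns, with total sum `k`. -/
noncomputable def rectPlanePartitionCount (l a k : ℕ) : ℕ :=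
  Nat.card {f : Fin l → Fin a → ℕ //
    (∀ i : Fin l, ∀ j j' : Fin a, j ≤ j' → f i j' ≤ f i j) ∧
    (∀ j : Fin a, ∀ i i' : Fin l, i ≤ i' → f i' j ≤ f i j) ∧
    ∑ i, ∑ j, f i j = k}

namespace RPP

variable {l a : ℕ}

/-- plane partition in an `l × a` box, as a function on `ℕ × ℕ` vanishing
outside the box, weakly decreasing in both coordinates. -/
def IsPP (l a : ℕ) (f : ℕ → ℕ → ℕ) : Prop :=
  (∀ x y, f (x+1) y ≤ f x y) ∧ (∀ x y, f x (y+1) ≤ f x y) ∧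
  (∀ x y, l ≤ x → f x y = 0) ∧ (∀ x y, a ≤ y → f x y = 0)

def wt (l a : ℕ) (f : ℕ → ℕ → ℕ) : ℕ := ∑ x ∈ range l, ∑ y ∈ range a, f x y

lemma mono_x {f : ℕ → ℕ → ℕ} (h : IsPP l a f) {x x' : ℕ} (y : ℕ) (hxx : x ≤ x') :
    f x' y ≤ f x y := by
  induction x' with
  | zero =>
    obtain rfl : x = 0 := by omega
    exact le_rfl
  | succ n ih =>
    rcases Nat.eq_or_lt_of_le hxx with rfl | hlt
    · exact le_rfl
    · exact (h.1 n y).trans (ih (by omega))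

lemma mono_y {f : ℕ → ℕ → ℕ} (h : IsPP l a f) (x : ℕ) {y y' : ℕ} (hyy : y ≤ y') :
    f x y' ≤ f x y := by
  induction y' with
  | zero =>
    obtain rfl : y = 0 := by omega
    exact le_rfl
  | succ n ih =>
    rcases Nat.eq_or_lt_of_le hyy with rfl | hlt
    · exact le_rfl
    · exact (h.2.1 x n).trans (ih (by omega))

/-- number of entries `≥ v` in column `y` -/
def cnt (l : ℕ) (f : ℕ → ℕ → ℕ) (y v : ℕ) : ℕ :=
  ((range l).filter fun x => v ≤ f x y).card

lemma cnt_iff {f : ℕ → ℕ → ℕ} (h : IsPP l a f) {y v : ℕ} (hv : 1 ≤ v) (x : ℕ) :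
    x < cnt l f y v ↔ v ≤ f x y := by
  constructor
  · intro hx
    by_contra hfx
    have hsub : ((range l).filter fun x' => v ≤ f x' y) ⊆ range x := by
      intro x' hx'
      simp only [mem_filter, mem_range] at hx' ⊢
      by_contra hge
      have h1 : f x' y ≤ f x y := mono_x h y (by omega)
      omega
    have := card_le_card hsub
    simp only [cnt] at hx
    simp [card_range] at this
    omega
  · intro hx
    have hxl : x < l := by
      by_contra hge
      rw [h.2.2.1 x y (by omega)] at hx; omega
    have hsub : range (x+1) ⊆ (range l).filter fun x' => v ≤ f x' y := by
      intro x' hx'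
      simp only [mem_range] at hx'
      simp only [mem_filter, mem_range]
      exact ⟨by omega, hx.trans (mono_x h y (by omega))⟩
    have := card_le_card hsub
    simp only [card_range] at this
    simpa [cnt] using lt_of_lt_of_le (Nat.lt_succ_self x) this

lemma cnt_le_l {f : ℕ → ℕ → ℕ} (y v : ℕ) : cnt l f y v ≤ l := by
  simpa [cnt] using card_le_card (filter_subset _ (range l))

/-- number of nonzero entries in row 0 -/
def rc (a : ℕ) (f : ℕ → ℕ → ℕ) : ℕ :=
  ((range a).filter fun y => 1 ≤ f 0 y).card

lemma rc_iff {f : ℕ → ℕ → ℕ} (h : IsPP l a f) (y : ℕ) :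
    y < rc a f ↔ 1 ≤ f 0 y := by
  constructor
  · intro hy
    by_contra hfy
    have hsub : ((range a).filter fun y' => 1 ≤ f 0 y') ⊆ range y := by
      intro y' hy'
      simp only [mem_filter, mem_range] at hy' ⊢
      by_contra hge
      have h1 : f 0 y' ≤ f 0 y := mono_y h 0 (by omega)
      omega
    have := card_le_card hsub
    simp only [rc] at hy
    simp [card_range] at this
    omega
  · intro hy
    have hya : y < a := by
      by_contra hge
      rw [h.2.2.2 0 y (by omega)] at hy; omega
    have hsub : range (y+1) ⊆ (range a).filter fun y' => 1 ≤ f 0 y' := by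
      intro y' hy'
      simp only [mem_range] at hy'
      simp only [mem_filter, mem_range]
      exact ⟨by omega, hy.trans (mono_y h 0 (by omega))⟩
    have := card_le_card hsub
    simp only [card_range] at this
    simpa [rc] using lt_of_lt_of_le (Nat.lt_succ_self y) this

lemma rc_le_a (f : ℕ → ℕ → ℕ) : rc a f ≤ a := by
  simpa [rc] using card_le_card (filter_subset _ (range a))

/-- all entries are at most `f 0 0` -/
lemma le_f00 {f : ℕ → ℕ → ℕ} (h : IsPP l a f) (x y : ℕ) : f x y ≤ f 0 0 :=
  (mono_y h x (Nat.zero_le y)).trans (mono_x h 0 (Nat.zero_le x))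

lemma zero_of_f00 {f : ℕ → ℕ → ℕ} (h : IsPP l a f) (h0 : f 0 0 = 0) (x y : ℕ) :
    f x y = 0 := by
  have := le_f00 h x y; omega

/-- index of last nonzero column -/
def c0 (a : ℕ) (f : ℕ → ℕ → ℕ) : ℕ := rc a f - 1

/-- rows of the Hillman–Grassl path: the run in column `c0 - k` occupies rows
`[pu k, pu (k+1)]`. -/
def pu (l a : ℕ) (f : ℕ → ℕ → ℕ) : ℕ → ℕ
  | 0 => 0
  | k+1 => cnt l f (c0 a f - k) (f (pu l a f k) (c0 a f - k)) - 1

def r0 (l a : ℕ) (f : ℕ → ℕ → ℕ) : ℕ := pu l a f (c0 a f + 1)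

/-- membership of `(x, y)` on the Hillman–Grassl path -/
def onP (l a : ℕ) (f : ℕ → ℕ → ℕ) (x y : ℕ) : Prop :=
  y ≤ c0 a f ∧ pu l a f (c0 a f - y) ≤ x ∧ x ≤ pu l a f (c0 a f - y + 1)

instance (f : ℕ → ℕ → ℕ) (x y : ℕ) : Decidable (onP l a f x y) := by
  unfold onP; infer_instance

def Phi (l a : ℕ) (f : ℕ → ℕ → ℕ) : ℕ → ℕ → ℕ := fun x y =>
  f x y - if onP l a f x y then 1 else 0

lemma pu_succ (f : ℕ → ℕ → ℕ) (k : ℕ) :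
    pu l a f (k+1) = cnt l f (c0 a f - k) (f (pu l a f k) (c0 a f - k)) - 1 := rfl

section Forward

variable {f : ℕ → ℕ → ℕ} (h : IsPP l a f) (hnz : 1 ≤ f 0 0)
include h hnz

lemma rc_pos : 0 < rc a f := (rc_iff h 0).2 hnz

lemma c0_lt_a : c0 a f < a := by
  have h1 := rc_pos h hnz
  have h2 := rc_le_a (a := a) f
  unfold c0; omega

lemma f0c0_pos : 1 ≤ f 0 (c0 a f) := by
  refine (rc_iff h _).1 ?_
  have := rc_pos h hnz
  unfold c0; omega

lemma zero_col {y : ℕ} (hy : c0 a f < y) (x : ℕ) : f x y = 0 := by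
  have h0 : f 0 y = 0 := by
    by_contra hne
    have := (rc_iff h y).2 (by omega)
    have := rc_pos h hnz
    unfold c0 at hy; omega
  have := mono_x h (x := 0) (x' := x) y (by omega)
  omega

lemma pv_pos : ∀ k, k ≤ c0 a f → 1 ≤ f (pu l a f k) (c0 a f - k) := by
  intro k
  induction k with
  | zero => intro _; simpa [pu] using f0c0_pos h hnz
  | succ k ih =>
    intro hk1
    have hk : k ≤ c0 a f := by omega
    have ihk := ih hk
    have hlt : pu l a f k < cnt l f (c0 a f - k) (f (pu l a f k) (c0 a f - k)) :=
      (cnt_iff h ihk _).2 le_rfl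
    have he := pu_succ (l := l) (a := a) f k
    have hval : f (pu l a f (k+1)) (c0 a f - k) = f (pu l a f k) (c0 a f - k) :=
      le_antisymm (mono_x h _ (by omega)) ((cnt_iff h ihk _).1 (by omega))
    calc 1 ≤ f (pu l a f k) (c0 a f - k) := ihk
      _ = f (pu l a f (k+1)) (c0 a f - k) := hval.symm
      _ ≤ f (pu l a f (k+1)) (c0 a f - (k+1)) := mono_y h _ (by omega)

lemma pu_lt_cnt {k : ℕ} (hk : k ≤ c0 a f) :
    pu l a f k < cnt l f (c0 a f - k) (f (pu l a f k) (c0 a f - k)) :=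
  (cnt_iff h (pv_pos h hnz k hk) _).2 le_rfl

lemma pu_mono {k : ℕ} (hk : k ≤ c0 a f) : pu l a f k ≤ pu l a f (k+1) := by
  have := pu_lt_cnt h hnz hk
  have := pu_succ (l := l) (a := a) f k
  omega

lemma run_val {k : ℕ} (hk : k ≤ c0 a f) {x : ℕ} (h1 : pu l a f k ≤ x)
    (h2 : x ≤ pu l a f (k+1)) : f x (c0 a f - k) = f (pu l a f k) (c0 a f - k) := by
  have hlt := pu_lt_cnt h hnz hk
  have he := pu_succ (l := l) (a := a) f k
  exact le_antisymm (mono_x h _ h1) ((cnt_iff h (pv_pos h hnz k hk) _).1 (by omega))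

lemma run_bot {k : ℕ} (hk : k ≤ c0 a f) :
    f (pu l a f (k+1) + 1) (c0 a f - k) < f (pu l a f k) (c0 a f - k) := by
  have hlt := pu_lt_cnt h hnz hk
  have he := pu_succ (l := l) (a := a) f k
  have hn : ¬ (pu l a f (k+1) + 1 < cnt l f (c0 a f - k) (f (pu l a f k) (c0 a f - k))) := by
    omega
  have := (cnt_iff (v := f (pu l a f k) (c0 a f - k)) h (pv_pos h hnz k hk)
    (pu l a f (k+1) + 1)).not.1 hn
  omega

lemma pu_lt_l : ∀ k, k ≤ c0 a f + 1 → pu l a f k < l := by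
  intro k hk
  match k with
  | 0 =>
    simp only [pu]
    by_contra hl
    have := h.2.2.1 0 0 (by omega)
    omega
  | k+1 =>
    have hlt := pu_lt_cnt h hnz (k := k) (by omega)
    have hle := cnt_le_l (l := l) (f := f) (c0 a f - k) (f (pu l a f k) (c0 a f - k))
    have he := pu_succ (l := l) (a := a) f k
    omega

lemma r0_lt_l : r0 l a f < l := pu_lt_l h hnz _ le_rfl

/-- value at a path cell, in column coordinates -/
lemma onP_val {x y : ℕ} (hp : onP l a f x y) :
    f x y = f (pu l a f (c0 a f - y)) y ∧ 1 ≤ f x y := by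
  obtain ⟨hy, h1, h2⟩ := hp
  have hcc : c0 a f - (c0 a f - y) = y := by omega
  have hk : c0 a f - y ≤ c0 a f := by omega
  have := run_val h hnz hk h1 h2
  have hpv := pv_pos h hnz (c0 a f - y) hk
  rw [hcc] at this hpv
  exact ⟨this, by omega⟩

/-- `f` decomposes as `Phi f` plus the path indicator -/
lemma phi_add (x y : ℕ) :
    Phi l a f x y + (if onP l a f x y then 1 else 0) = f x y := by
  unfold Phi
  split
  · rename_i hp
    have := (onP_val h hnz hp).2
    omega
  · omega

omit h hnz in
lemma phi_le (x y : ℕ) : Phi l a f x y ≤ f x y := Nat.sub_le _ _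

lemma phi_isPP : IsPP l a (Phi l a f) := by
  have hIs : IsPP l a f := h
  obtain ⟨hcol, hrow, hbx, hby⟩ := h
  refine ⟨?_, ?_, ?_, ?_⟩
  · -- columns
    intro x y
    unfold Phi
    by_cases hB : onP l a f (x+1) y
    · rw [if_pos hB]
      by_cases hA : onP l a f x y
      · rw [if_pos hA]; exact Nat.sub_le_sub_right (hcol x y) 1
      · rw [if_neg hA]
        have := hcol x y; omega
    · rw [if_neg hB]
      by_cases hA : onP l a f x y
      · rw [if_pos hA]
        obtain ⟨hy, h1, h2⟩ := hA
        have hx : x = pu l a f (c0 a f - y + 1) := by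
          by_contra hne
          exact hB ⟨hy, by omega, by omega⟩
        have hrb := run_bot hIs hnz (k := c0 a f - y) (by omega)
        have hcc : c0 a f - (c0 a f - y) = y := by omega
        rw [hcc] at hrb
        have hrv := (onP_val hIs hnz ⟨hy, h1, h2⟩).1
        rw [← hx] at hrb
        omega
      · rw [if_neg hA]
        have := hcol x y; omega
  · -- rows
    intro x y
    unfold Phi
    by_cases hB : onP l a f x (y+1)
    · rw [if_pos hB]
      by_cases hA : onP l a f x y
      · rw [if_pos hA]; exact Nat.sub_le_sub_right (hrow x y) 1
      · rw [if_neg hA]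
        have := hrow x y; omega
    · rw [if_neg hB]
      by_cases hA : onP l a f x y
      · rw [if_pos hA]
        obtain ⟨hy, h1, h2⟩ := hA
        have hval := (onP_val hIs hnz ⟨hy, h1, h2⟩).1
        rcases Nat.eq_or_lt_of_le hy with hyc | hylt
        · -- y = c0 : next column is zero
          have hz : f x (y+1) = 0 := zero_col hIs hnz (by omega) x
          have := (onP_val hIs hnz ⟨hy, h1, h2⟩).2
          omega
        · -- y < c0
          have hy1 : y + 1 ≤ c0 a f := by omega
          have hcc' : c0 a f - (y+1) + 1 = c0 a f - y := by omega
          have hcck : c0 a f - (c0 a f - (y+1)) = y + 1 := by omega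
          have hpm : pu l a f (c0 a f - (y+1)) ≤ pu l a f (c0 a f - (y+1) + 1) :=
            pu_mono hIs hnz (by omega)
          have hpm' : pu l a f (c0 a f - (y+1)) ≤ pu l a f (c0 a f - y) := by
            rw [← hcc']; exact hpm
          have hxgt : pu l a f (c0 a f - y) < x := by
            by_contra hle
            refine hB ⟨hy1, le_trans hpm' h1, ?_⟩
            rw [hcc']; omega
          have hrb := run_bot hIs hnz (k := c0 a f - (y+1)) (by omega)
          rw [hcck, hcc'] at hrb
          have hm : f x (y+1) ≤ f (pu l a f (c0 a f - y) + 1) (y+1) :=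
            mono_x hIs _ (by omega)
          have hbotval : f (pu l a f (c0 a f - y)) (y+1)
              = f (pu l a f (c0 a f - (y+1))) (y+1) := by
            have := run_val hIs hnz (k := c0 a f - (y+1)) (by omega)
              (x := pu l a f (c0 a f - (y+1) + 1)) (by omega) le_rfl
            rw [hcck, hcc'] at this
            exact this
          have hstep : f (pu l a f (c0 a f - y)) (y+1) ≤ f (pu l a f (c0 a f - y)) y :=
            mono_y hIs _ (by omega)
          have hxy : f x y = f (pu l a f (c0 a f - y)) y := hval
          omega
      · rw [if_neg hA]
        have := hrow x y; omega
  · intro x y hx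
    unfold Phi
    rw [hbx x y hx]
    omega
  · intro x y hy
    unfold Phi
    rw [hby x y hy]
    omega

end Forward

section Weight

variable {f : ℕ → ℕ → ℕ} (h : IsPP l a f) (hnz : 1 ≤ f 0 0)
include h hnz

lemma pu_tel : ∀ n, n ≤ c0 a f + 1 →
    ∑ k ∈ range n, (pu l a f (k+1) + 1 - pu l a f k) = pu l a f n + n := by
  intro n
  induction n with
  | zero => intro _; simp [pu]
  | succ n ih =>
    intro hn
    rw [Finset.sum_range_succ, ih (by omega)]
    have := pu_mono h hnz (k := n) (by omega)
    omega

lemma ind_sum :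
    ∑ x ∈ range l, ∑ y ∈ range a, (if onP l a f x y then 1 else 0)
      = r0 l a f + c0 a f + 1 := by
  rw [Finset.sum_comm]
  have hcol : ∀ y ∈ range a, ∑ x ∈ range l, (if onP l a f x y then 1 else 0)
      = if y ≤ c0 a f then pu l a f (c0 a f - y + 1) + 1 - pu l a f (c0 a f - y) else 0 := by
    intro y _
    rw [← Finset.sum_filter, Finset.sum_const, smul_eq_mul, mul_one]
    by_cases hy : y ≤ c0 a f
    · rw [if_pos hy]
      have hfe : (range l).filter (fun x => onP l a f x y)
          = Finset.Icc (pu l a f (c0 a f - y)) (pu l a f (c0 a f - y + 1)) := by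
        ext x
        simp only [Finset.mem_filter, Finset.mem_range, Finset.mem_Icc]
        constructor
        · rintro ⟨_, _, h1, h2⟩; exact ⟨h1, h2⟩
        · rintro ⟨h1, h2⟩
          have hxl : pu l a f (c0 a f - y + 1) < l := pu_lt_l h hnz _ (by omega)
          exact ⟨by omega, hy, h1, h2⟩
      rw [hfe, Nat.card_Icc]
    · rw [if_neg hy]
      have : (range l).filter (fun x => onP l a f x y) = ∅ := by
        ext x
        simp only [Finset.mem_filter, Finset.mem_range, Finset.notMem_empty, iff_false]
        rintro ⟨_, hc, _⟩
        exact hy hc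
      rw [this, Finset.card_empty]
  rw [Finset.sum_congr rfl hcol]
  have hsub : ∑ y ∈ range a, (if y ≤ c0 a f then
        pu l a f (c0 a f - y + 1) + 1 - pu l a f (c0 a f - y) else 0)
      = ∑ y ∈ range (c0 a f + 1),
        (pu l a f (c0 a f - y + 1) + 1 - pu l a f (c0 a f - y)) := by
    rw [← Finset.sum_filter]
    have : (range a).filter (fun y => y ≤ c0 a f) = range (c0 a f + 1) := by
      ext y
      simp only [Finset.mem_filter, Finset.mem_range]
      have := c0_lt_a h hnz
      omega
    rw [this]
  rw [hsub]
  have hrefl := Finset.sum_range_reflect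
    (fun k => pu l a f (k + 1) + 1 - pu l a f k) (c0 a f + 1)
  have heq : ∀ y ∈ range (c0 a f + 1),
      pu l a f (c0 a f - y + 1) + 1 - pu l a f (c0 a f - y)
        = pu l a f ((c0 a f + 1 - 1 - y) + 1) + 1 - pu l a f (c0 a f + 1 - 1 - y) := by
    intro y _
    congr 2 <;> omega
  rw [Finset.sum_congr rfl heq, hrefl, pu_tel h hnz _ le_rfl]
  unfold r0
  omega

lemma wt_phi : wt l a f = wt l a (Phi l a f) + (r0 l a f + c0 a f + 1) := by
  have e1 : ∀ x ∈ range l, ∑ y ∈ range a, f x y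
      = ∑ y ∈ range a, (Phi l a f x y + if onP l a f x y then 1 else 0) := fun x _ =>
    Finset.sum_congr rfl fun y _ => (phi_add h hnz x y).symm
  calc wt l a f
      = ∑ x ∈ range l, ∑ y ∈ range a,
          (Phi l a f x y + if onP l a f x y then 1 else 0) := Finset.sum_congr rfl e1
    _ = wt l a (Phi l a f)
        + ∑ x ∈ range l, ∑ y ∈ range a, (if onP l a f x y then 1 else 0) := by
        unfold wt
        rw [← Finset.sum_add_distrib]
        exact Finset.sum_congr rfl fun x _ => Finset.sum_add_distrib
    _ = _ := by rw [ind_sum h hnz]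

end Weight

/-- reverse path rows: the run of the reverse path in column `y` occupies rows
`[q (y+1), q y]`. -/
def q (l : ℕ) (f : ℕ → ℕ → ℕ) (r : ℕ) : ℕ → ℕ
  | 0 => r
  | y+1 => cnt l f y (f (q l f r y) y + 1)

def onQ (l : ℕ) (f : ℕ → ℕ → ℕ) (r c x y : ℕ) : Prop :=
  y ≤ c ∧ q l f r (y+1) ≤ x ∧ x ≤ q l f r y

instance (f : ℕ → ℕ → ℕ) (r c x y : ℕ) : Decidable (onQ l f r c x y) := by
  unfold onQ; infer_instance

def Psi (l : ℕ) (f : ℕ → ℕ → ℕ) (r c : ℕ) : ℕ → ℕ → ℕ := fun x y =>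
  f x y + if onQ l f r c x y then 1 else 0

lemma q_succ (f : ℕ → ℕ → ℕ) (r y : ℕ) :
    q l f r (y+1) = cnt l f y (f (q l f r y) y + 1) := rfl

section Backward

variable {f : ℕ → ℕ → ℕ} {r c : ℕ} (h : IsPP l a f) (hr : r < l) (hc : c < a)
include h

lemma q_mono (y : ℕ) : q l f r (y+1) ≤ q l f r y := by
  by_contra hlt
  have := (cnt_iff h (y := y) (v := f (q l f r y) y + 1) (by omega) (q l f r y)).1
    (by rw [q_succ] at hlt; omega)
  omega

lemma q_le_r : ∀ y, q l f r y ≤ r := by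
  intro y
  induction y with
  | zero => exact le_rfl
  | succ y ih => exact (q_mono h y).trans ih

lemma qrun_val {x y : ℕ} (hx1 : q l f r (y+1) ≤ x) (hx2 : x ≤ q l f r y) :
    f x y = f (q l f r y) y := by
  have h1 : f (q l f r y) y ≤ f x y := mono_x h _ hx2
  have h2 : ¬ (x < cnt l f y (f (q l f r y) y + 1)) := by rw [← q_succ]; omega
  have := (cnt_iff h (y := y) (v := f (q l f r y) y + 1) (by omega) x).not.1 h2
  omega

lemma q_above {x y : ℕ} (hx : x < q l f r (y+1)) : f (q l f r y) y < f x y := by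
  have := (cnt_iff h (y := y) (v := f (q l f r y) y + 1) (by omega) x).1
    (by rw [← q_succ]; omega)
  omega

/-- comparison: the reverse path started weakly above the recorded cell stays
weakly above the forward path. -/
lemma q_cmp (hnz : 1 ≤ f 0 0) (hrr : r ≤ r0 l a f) :
    ∀ y, y ≤ c0 a f → q l f r (y+1) ≤ pu l a f (c0 a f - y) := by
  intro y
  induction y with
  | zero =>
    intro _
    have hcc : c0 a f - c0 a f = 0 := by omega
    have hbot : f (pu l a f (c0 a f + 1)) 0 = f (pu l a f (c0 a f)) 0 := by
      have := run_val h hnz (k := c0 a f) le_rfl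
        (x := pu l a f (c0 a f + 1)) (pu_mono h hnz le_rfl) le_rfl
      rwa [hcc] at this
    have hfr : f (pu l a f (c0 a f)) 0 ≤ f r 0 := by
      rw [← hbot]
      exact mono_x h _ (by unfold r0 at hrr; omega)
    rw [Nat.sub_zero, q_succ]
    have hsub : (range l).filter (fun x => f (q l f r 0) 0 + 1 ≤ f x 0)
        ⊆ range (pu l a f (c0 a f)) := by
      intro x hx
      simp only [Finset.mem_filter, Finset.mem_range] at hx ⊢
      by_contra hge
      have h1 : f x 0 ≤ f (pu l a f (c0 a f)) 0 := mono_x h _ (by omega)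
      have h2 : f r 0 ≤ f (q l f r 0) 0 := le_rfl
      omega
    have := card_le_card hsub
    simpa [cnt, card_range] using this
  | succ y ih =>
    intro hy
    have ihy := ih (by omega)
    have hcc : c0 a f - (y+1) + 1 = c0 a f - y := by omega
    have hcck : c0 a f - (c0 a f - (y+1)) = y + 1 := by omega
    have hbot : f (pu l a f (c0 a f - y)) (y+1) = f (pu l a f (c0 a f - (y+1))) (y+1) := by
      have := run_val h hnz (k := c0 a f - (y+1)) (by omega)
        (x := pu l a f (c0 a f - (y+1) + 1)) (pu_mono h hnz (by omega)) le_rfl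
      rwa [hcck, hcc] at this
    have hfr : f (pu l a f (c0 a f - (y+1))) (y+1) ≤ f (q l f r (y+1)) (y+1) := by
      rw [← hbot]
      exact mono_x h _ ihy
    rw [q_succ]
    have hsub : (range l).filter (fun x => f (q l f r (y+1)) (y+1) + 1 ≤ f x (y+1))
        ⊆ range (pu l a f (c0 a f - (y+1))) := by
      intro x hx
      simp only [Finset.mem_filter, Finset.mem_range] at hx ⊢
      by_contra hge
      have h1 : f x (y+1) ≤ f (pu l a f (c0 a f - (y+1))) (y+1) := mono_x h _ (by omega)
      omega
    have := card_le_card hsub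
    simpa [cnt, card_range] using this

lemma q_anti : ∀ {m k : ℕ}, m ≤ k → q l f r k ≤ q l f r m := by
  intro m k hmk
  induction k with
  | zero =>
    obtain rfl : m = 0 := by omega
    exact le_rfl
  | succ k ihk =>
    rcases Nat.eq_or_lt_of_le hmk with rfl | hlt
    · exact le_rfl
    · exact (q_mono h k).trans (ihk (by omega))

lemma q_tel : ∀ n, ∑ y ∈ range n, (q l f r y + 1 - q l f r (y+1)) = n + q l f r 0 - q l f r n := by
  intro n
  induction n with
  | zero => simp
  | succ n ih =>
    rw [Finset.sum_range_succ, ih]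
    have h1 := q_mono (l := l) (r := r) h n
    have h2 : q l f r n ≤ q l f r 0 := q_anti h (Nat.zero_le n)
    omega

variable (hcond : 1 ≤ f 0 0 → (c0 a f < c ∨ (c0 a f = c ∧ r ≤ r0 l a f)))
include hcond

lemma q_top : q l f r (c+1) = 0 := by
  by_cases hnz : 1 ≤ f 0 0
  · rcases hcond hnz with hlt | ⟨hec, hrr⟩
    · -- column c is zero
      rw [q_succ]
      have hz : ∀ x, f x c = 0 := zero_col h hnz hlt
      have : (range l).filter (fun x => f (q l f r c) c + 1 ≤ f x c) = ∅ := by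
        ext x
        simp only [Finset.mem_filter, Finset.notMem_empty, iff_false, not_and]
        intro _
        rw [hz x, hz (q l f r c)]
        omega
      simp [cnt, this]
      intro x _; simp [hz]
    · have := q_cmp h hnz hrr (c0 a f) le_rfl
      subst hec
      simpa [pu] using this
  · -- f is identically zero
    rw [q_succ]
    have hz : ∀ x y, f x y = 0 := zero_of_f00 h (by omega)
    have : (range l).filter (fun x => f (q l f r c) c + 1 ≤ f x c) = ∅ := by
      ext x
      simp only [Finset.mem_filter, Finset.notMem_empty, iff_false, not_and]
      intro _
      rw [hz x c, hz (q l f r c) c]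
      omega
    simp [cnt, this]
    intro x _; simp [hz]

omit hcond

include hr hc

lemma psi_isPP : IsPP l a (Psi l f r c) := by
  have hIs : IsPP l a f := h
  obtain ⟨hcol, hrow, hbx, hby⟩ := h
  refine ⟨?_, ?_, ?_, ?_⟩
  · intro x y
    unfold Psi
    by_cases hA : onQ l f r c x y
    · by_cases hB : onQ l f r c (x+1) y
      · rw [if_pos hA, if_pos hB]
        have := hcol x y; omega
      · rw [if_pos hA, if_neg hB]
        obtain ⟨hy, h1, h2⟩ := hA
        have hx : x = q l f r y := by
          by_contra hne
          exact hB ⟨hy, by omega, by omega⟩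
        have hv : f x y = f (q l f r y) y := qrun_val hIs h1 h2
        have := hcol x y
        subst hx
        omega
    · by_cases hB : onQ l f r c (x+1) y
      · rw [if_neg hA, if_pos hB]
        obtain ⟨hy, h1, h2⟩ := hB
        have hxlt : x < q l f r (y+1) := by
          by_contra hge
          exact hA ⟨hy, by omega, by omega⟩
        have hab := q_above hIs hxlt
        have hv : f (x+1) y = f (q l f r y) y := qrun_val hIs h1 h2
        omega
      · rw [if_neg hA, if_neg hB]
        have := hcol x y; omega
  · intro x y
    unfold Psi
    by_cases hB : onQ l f r c x (y+1)
    · by_cases hA : onQ l f r c x y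
      · rw [if_pos hA, if_pos hB]
        have := hrow x y; omega
      · rw [if_neg hA, if_pos hB]
        obtain ⟨hy1, h1, h2⟩ := hB
        have hxlt : x < q l f r (y+1) := by
          rcases Nat.lt_or_ge x (q l f r (y+1)) with hlt | hge
          · exact hlt
          · exact absurd ⟨by omega, hge, h2.trans (q_mono hIs y)⟩ hA
        have hab := q_above hIs hxlt
        have hv1 : f x (y+1) = f (q l f r (y+1)) (y+1) := qrun_val hIs h1 h2
        have hv2 : f (q l f r (y+1)) (y+1) ≤ f (q l f r (y+1)) y := hrow _ y
        have hv3 : f (q l f r (y+1)) y = f (q l f r y) y :=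
          qrun_val hIs le_rfl (q_mono hIs y)
        omega
    · by_cases hA : onQ l f r c x y
      · rw [if_pos hA, if_neg hB]
        have := hrow x y; omega
      · rw [if_neg hA, if_neg hB]
        have := hrow x y; omega
  · intro x y hx
    unfold Psi
    rw [hbx x y hx, if_neg]
    rintro ⟨hy, h1, h2⟩
    have := q_le_r (l := l) (r := r) hIs y
    omega
  · intro x y hy
    unfold Psi
    rw [hby x y hy, if_neg]
    rintro ⟨hyc, _, _⟩
    omega

include hcond

lemma psi_nz : 1 ≤ Psi l f r c 0 0 := by
  by_cases hnz : 1 ≤ f 0 0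
  · have : f 0 0 ≤ Psi l f r c 0 0 := Nat.le_add_right _ _
    omega
  · unfold Psi
    rw [if_pos]
    · omega
    · refine ⟨Nat.zero_le c, ?_, Nat.zero_le _⟩
      rw [q_succ]
      have hz : ∀ x y, f x y = 0 := zero_of_f00 h (by omega)
      have : (range l).filter (fun x => f (q l f r 0) 0 + 1 ≤ f x 0) = ∅ := by
        ext x
        simp only [Finset.mem_filter, Finset.notMem_empty, iff_false, not_and]
        intro _
        rw [hz x 0, hz (q l f r 0) 0]
        omega
      simp [cnt, this]
      intro x _; simp [hz]

lemma wt_psi : wt l a (Psi l f r c) = wt l a f + (r + c + 1) := by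
  have hIs : IsPP l a f := h
  have e1 : wt l a (Psi l f r c)
      = wt l a f + ∑ x ∈ range l, ∑ y ∈ range a, (if onQ l f r c x y then 1 else 0) := by
    unfold wt Psi
    rw [← Finset.sum_add_distrib]
    exact Finset.sum_congr rfl fun x _ => Finset.sum_add_distrib
  rw [e1]
  congr 1
  rw [Finset.sum_comm]
  have hcol2 : ∀ y ∈ range a, ∑ x ∈ range l, (if onQ l f r c x y then 1 else 0)
      = if y ≤ c then q l f r y + 1 - q l f r (y+1) else 0 := by
    intro y _
    rw [← Finset.sum_filter, Finset.sum_const, smul_eq_mul, mul_one]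
    by_cases hy : y ≤ c
    · rw [if_pos hy]
      have hfe : (range l).filter (fun x => onQ l f r c x y)
          = Finset.Icc (q l f r (y+1)) (q l f r y) := by
        ext x
        simp only [Finset.mem_filter, Finset.mem_range, Finset.mem_Icc]
        constructor
        · rintro ⟨_, _, h1, h2⟩; exact ⟨h1, h2⟩
        · rintro ⟨h1, h2⟩
          have := q_le_r (l := l) (r := r) hIs y
          exact ⟨by omega, hy, h1, h2⟩
      rw [hfe, Nat.card_Icc]
    · rw [if_neg hy]
      have : (range l).filter (fun x => onQ l f r c x y) = ∅ := by
        ext x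
        simp only [Finset.mem_filter, Finset.mem_range, Finset.notMem_empty, iff_false]
        rintro ⟨_, hyc, _⟩
        exact hy hyc
      rw [this, Finset.card_empty]
  rw [Finset.sum_congr rfl hcol2]
  rw [← Finset.sum_filter]
  have hfr : (range a).filter (fun y => y ≤ c) = range (c+1) := by
    ext y
    simp only [Finset.mem_filter, Finset.mem_range]
    omega
  rw [hfr, q_tel h, q_top h hcond]
  simp only [q]
  omega

lemma c0_psi : c0 a (Psi l f r c) = c := by
  have hfilter : (range a).filter (fun y => 1 ≤ Psi l f r c 0 y) = range (c+1) := by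
    ext y
    simp only [Finset.mem_filter, Finset.mem_range]
    constructor
    · rintro ⟨hya, hGy⟩
      by_contra hyc
      have hof : f 0 y = 0 := by
        by_cases hnz : 1 ≤ f 0 0
        · rcases hcond hnz with hlt | ⟨hec, _⟩
          · exact zero_col h hnz (by omega) 0
          · exact zero_col h hnz (by omega) 0
        · exact zero_of_f00 h (by omega) 0 y
      have hno : ¬ onQ l f r c 0 y := by rintro ⟨hyy, _, _⟩; omega
      unfold Psi at hGy
      rw [if_neg hno] at hGy
      omega
    · intro hy
      refine ⟨by omega, ?_⟩
      by_cases hq : q l f r (y+1) = 0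
      · unfold Psi
        rw [if_pos ⟨by omega, by omega, Nat.zero_le _⟩]
        omega
      · have hab := q_above (r := r) (x := 0) (y := y) h (by omega)
        have hle : f 0 y ≤ Psi l f r c 0 y := Nat.le_add_right _ _
        omega
  unfold c0 rc
  rw [hfilter, card_range]
  omega

lemma pu_psi : ∀ k, k ≤ c + 1 → pu l a (Psi l f r c) k = q l f r (c + 1 - k) := by
  intro k
  induction k with
  | zero =>
    intro _
    simp only [pu, Nat.sub_zero]
    exact (q_top h hcond).symm
  | succ k ih =>
    intro hk1
    have hk : k ≤ c := by omega
    have ihk := ih (by omega)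
    have hy : c + 1 - k = (c - k) + 1 := by omega
    have honQ : onQ l f r c (q l f r ((c-k)+1)) (c-k) :=
      ⟨by omega, le_rfl, q_mono h (c-k)⟩
    have hv : f (q l f r ((c-k)+1)) (c-k) = f (q l f r (c-k)) (c-k) :=
      qrun_val h le_rfl (q_mono h (c-k))
    have hGval : Psi l f r c (q l f r ((c-k)+1)) (c-k) = f (q l f r (c-k)) (c-k) + 1 := by
      unfold Psi
      rw [if_pos honQ, hv]
    have hcnt : cnt l (Psi l f r c) (c-k) (f (q l f r (c-k)) (c-k) + 1) = q l f r (c-k) + 1 := by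
      unfold cnt
      have hfl : (range l).filter (fun x => f (q l f r (c-k)) (c-k) + 1 ≤ Psi l f r c x (c-k))
          = range (q l f r (c-k) + 1) := by
        ext x
        simp only [Finset.mem_filter, Finset.mem_range]
        constructor
        · rintro ⟨hxl, hxv⟩
          by_contra hgt
          have hnot : ¬ onQ l f r c x (c-k) := by rintro ⟨_, _, hxq⟩; omega
          have hPx : Psi l f r c x (c-k) = f x (c-k) := by
            unfold Psi; rw [if_neg hnot]
            omega
          have hmx : f x (c-k) ≤ f (q l f r (c-k)) (c-k) := mono_x h _ (by omega)
          omega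
        · intro hxq
          have hxl : x < l := by
            have := q_le_r (l := l) (r := r) h (c-k)
            omega
          refine ⟨hxl, ?_⟩
          by_cases hin : q l f r ((c-k)+1) ≤ x
          · have hPx : Psi l f r c x (c-k) = f x (c-k) + 1 := by
              unfold Psi
              rw [if_pos (show onQ l f r c x (c-k) from ⟨by omega, hin, by omega⟩)]
            have := qrun_val h hin (show x ≤ q l f r (c-k) by omega)
            omega
          · have hab := q_above (r := r) (x := x) (y := c - k) h (by omega)
            have hle : f x (c-k) ≤ Psi l f r c x (c-k) := Nat.le_add_right _ _
            omega
      rw [hfl, card_range]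
    have hps := pu_succ (l := l) (a := a) (Psi l f r c) k
    rw [c0_psi (h := h) (hr := hr) (hc := hc) (hcond := hcond)] at hps
    rw [ihk, hy, hGval, hcnt] at hps
    have hidx : c + 1 - (k+1) = c - k := by omega
    rw [hidx, hps]
    omega

lemma r0_psi : r0 l a (Psi l f r c) = r := by
  unfold r0
  rw [c0_psi (h := h) (hr := hr) (hc := hc) (hcond := hcond)]
  rw [pu_psi (h := h) (hr := hr) (hc := hc) (hcond := hcond) (c+1) le_rfl]
  simp [q]

lemma phi_psi : Phi l a (Psi l f r c) = f := by
  funext x y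
  have hiff : onP l a (Psi l f r c) x y ↔ onQ l f r c x y := by
    unfold onP
    rw [c0_psi (h := h) (hr := hr) (hc := hc) (hcond := hcond)]
    constructor
    · rintro ⟨hy, h1, h2⟩
      rw [pu_psi (h := h) (hr := hr) (hc := hc) (hcond := hcond) (c - y) (by omega)] at h1
      rw [pu_psi (h := h) (hr := hr) (hc := hc) (hcond := hcond) ((c - y) + 1) (by omega)] at h2
      have e1 : c + 1 - (c - y) = y + 1 := by omega
      have e2 : c + 1 - ((c - y) + 1) = y := by omega
      rw [e1] at h1
      rw [e2] at h2
      exact ⟨hy, h1, h2⟩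
    · rintro ⟨hy, h1, h2⟩
      refine ⟨hy, ?_, ?_⟩
      · rw [pu_psi (h := h) (hr := hr) (hc := hc) (hcond := hcond) (c - y) (by omega)]
        have e1 : c + 1 - (c - y) = y + 1 := by omega
        rw [e1]
        exact h1
      · rw [pu_psi (h := h) (hr := hr) (hc := hc) (hcond := hcond) ((c - y) + 1) (by omega)]
        have e2 : c + 1 - ((c - y) + 1) = y := by omega
        rw [e2]
        exact h2
  unfold Phi
  by_cases hq : onQ l f r c x y
  · rw [if_pos (hiff.2 hq)]
    unfold Psi
    rw [if_pos hq]
    omega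
  · rw [if_neg (fun hp => hq (hiff.1 hp))]
    unfold Psi
    rw [if_neg hq]
    omega

end Backward

def rank (l a : ℕ) (f : ℕ → ℕ → ℕ) : ℕ := c0 a f * l + (l - 1 - r0 l a f)

section Inverse

variable {f : ℕ → ℕ → ℕ} (h : IsPP l a f) (hnz : 1 ≤ f 0 0)
include h hnz

lemma q_phi : ∀ y, y ≤ c0 a f + 1 →
    q l (Phi l a f) (r0 l a f) y = pu l a f (c0 a f + 1 - y) := by
  intro y
  induction y with
  | zero => intro _; simp [q, r0, Nat.sub_zero]
  | succ y ih =>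
    intro hy1
    have hyc : y ≤ c0 a f := by omega
    have ihy := ih (by omega)
    have he1 : c0 a f + 1 - y = (c0 a f - y) + 1 := by omega
    rw [he1] at ihy
    have hk : c0 a f - y ≤ c0 a f := by omega
    have hcc : c0 a f - (c0 a f - y) = y := by omega
    have honp : onP l a f (pu l a f ((c0 a f - y)+1)) y :=
      ⟨hyc, pu_mono h hnz hk, le_rfl⟩
    have hrv : f (pu l a f ((c0 a f - y)+1)) y = f (pu l a f (c0 a f - y)) y := by
      have := run_val h hnz hk (pu_mono h hnz hk) le_rfl
      rwa [hcc] at this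
    have hpv : 1 ≤ f (pu l a f (c0 a f - y)) y := by
      have := pv_pos h hnz _ hk
      rwa [hcc] at this
    have hFval : Phi l a f (pu l a f ((c0 a f - y)+1)) y
        = f (pu l a f (c0 a f - y)) y - 1 := by
      unfold Phi
      rw [if_pos honp, hrv]
    have hrb : f (pu l a f ((c0 a f - y)+1) + 1) y < f (pu l a f (c0 a f - y)) y := by
      have := run_bot h hnz hk
      rwa [hcc] at this
    have hcnt : cnt l (Phi l a f) y (f (pu l a f (c0 a f - y)) y)
        = pu l a f (c0 a f - y) := by
      unfold cnt
      have hfl : (range l).filter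
          (fun x => f (pu l a f (c0 a f - y)) y ≤ Phi l a f x y)
          = range (pu l a f (c0 a f - y)) := by
        ext x
        simp only [Finset.mem_filter, Finset.mem_range]
        constructor
        · rintro ⟨hxl, hxv⟩
          by_contra hge
          by_cases hle2 : x ≤ pu l a f ((c0 a f - y)+1)
          · have honx : onP l a f x y := ⟨hyc, by omega, hle2⟩
            have hval := (onP_val h hnz honx).1
            have hPx : Phi l a f x y = f x y - 1 := by unfold Phi; rw [if_pos honx]
            omega
          · have hoff : ¬ onP l a f x y := by
              rintro ⟨_, _, hx2⟩; omega
            have hPx : Phi l a f x y = f x y := by unfold Phi; rw [if_neg hoff]; omega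
            have hmx : f x y ≤ f (pu l a f ((c0 a f - y)+1) + 1) y := mono_x h _ (by omega)
            omega
        · intro hxlt
          have hxl : x < l := by
            have h1 := pu_lt_l h hnz ((c0 a f - y)+1) (by omega)
            have h2 := pu_mono h hnz hk
            omega
          refine ⟨hxl, ?_⟩
          have hoff : ¬ onP l a f x y := by rintro ⟨_, hx1, _⟩; omega
          have hPx : Phi l a f x y = f x y := by unfold Phi; rw [if_neg hoff]; omega
          have hmx : f (pu l a f (c0 a f - y)) y ≤ f x y := mono_x h _ (by omega)
          omega
      rw [hfl, card_range]
    have hqs := q_succ (l := l) (Phi l a f) (r0 l a f) y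
    rw [ihy, hFval] at hqs
    have hth : f (pu l a f (c0 a f - y)) y - 1 + 1 = f (pu l a f (c0 a f - y)) y := by omega
    rw [hth, hcnt] at hqs
    have he2 : c0 a f + 1 - (y+1) = c0 a f - y := by omega
    rw [he2, hqs]

lemma psi_phi : Psi l (Phi l a f) (r0 l a f) (c0 a f) = f := by
  funext x y
  have hiff : onQ l (Phi l a f) (r0 l a f) (c0 a f) x y ↔ onP l a f x y := by
    unfold onQ onP
    constructor
    · rintro ⟨hy, h1, h2⟩
      rw [q_phi h hnz (y+1) (by omega)] at h1
      rw [q_phi h hnz y (by omega)] at h2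
      have e1 : c0 a f + 1 - (y+1) = c0 a f - y := by omega
      have e2 : c0 a f + 1 - y = (c0 a f - y) + 1 := by omega
      rw [e1] at h1; rw [e2] at h2
      exact ⟨hy, h1, h2⟩
    · rintro ⟨hy, h1, h2⟩
      refine ⟨hy, ?_, ?_⟩
      · rw [q_phi h hnz (y+1) (by omega)]
        have e1 : c0 a f + 1 - (y+1) = c0 a f - y := by omega
        rw [e1]; exact h1
      · rw [q_phi h hnz y (by omega)]
        have e2 : c0 a f + 1 - y = (c0 a f - y) + 1 := by omega
        rw [e2]; exact h2
  unfold Psi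
  by_cases hp : onP l a f x y
  · rw [if_pos (hiff.2 hp)]
    have := (onP_val h hnz hp).2
    unfold Phi
    rw [if_pos hp]
    omega
  · rw [if_neg (fun hq => hp (hiff.1 hq))]
    unfold Phi
    rw [if_neg hp]
    omega

lemma c0_phi_le : c0 a (Phi l a f) ≤ c0 a f := by
  have hmono : rc a (Phi l a f) ≤ rc a f := by
    apply card_le_card
    apply Finset.monotone_filter_right
    intro y hy
    have := phi_le (l := l) (a := a) (f := f) 0 y
    omega
  unfold c0
  omega

lemma pu_phi_ge (hFnz : 1 ≤ Phi l a f 0 0) (hceq : c0 a (Phi l a f) = c0 a f) :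
    ∀ k, k ≤ c0 a f + 1 → pu l a f k ≤ pu l a (Phi l a f) k := by
  have hF : IsPP l a (Phi l a f) := phi_isPP h hnz
  intro k
  induction k with
  | zero => intro _; simp [pu]
  | succ k ih =>
    intro hk1
    have hk : k ≤ c0 a f := by omega
    have ihk := ih (by omega)
    have hcc : c0 a f - (c0 a f - (c0 a f - k)) = c0 a f - k := by omega
    by_cases hcase : pu l a (Phi l a f) k ≤ pu l a f (k+1)
    · have hcc2 : c0 a f - (c0 a f - k) = k := by omega
      have honx : onP l a f (pu l a (Phi l a f) k) (c0 a f - k) :=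
        ⟨by omega, by rw [hcc2]; exact ihk, by rw [hcc2]; exact hcase⟩
      have hval := (onP_val h hnz honx).1
      rw [hcc2] at hval
      have hFv : Phi l a f (pu l a (Phi l a f) k) (c0 a f - k)
          = f (pu l a f k) (c0 a f - k) - 1 := by
        generalize hZ : pu l a (Phi l a f) k = Z at honx hval ⊢
        unfold Phi
        rw [if_pos honx, hval]
      have hFpv : 1 ≤ Phi l a f (pu l a (Phi l a f) k) (c0 a f - k) := by
        have := pv_pos hF hFnz k (by omega)
        rwa [hceq] at this
      have hsub : (range l).filter
            (fun x => f (pu l a f k) (c0 a f - k) ≤ f x (c0 a f - k))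
          ⊆ (range l).filter
            (fun x => f (pu l a f k) (c0 a f - k) - 1 ≤ Phi l a f x (c0 a f - k)) := by
        intro x hx
        simp only [Finset.mem_filter] at hx ⊢
        refine ⟨hx.1, ?_⟩
        have h1 : f x (c0 a f - k) - 1 ≤ Phi l a f x (c0 a f - k) := by
          unfold Phi; split <;> omega
        have := hx.2
        omega
      have hcard := card_le_card hsub
      have he1 := pu_succ (l := l) (a := a) f k
      have he2 := pu_succ (l := l) (a := a) (Phi l a f) k
      rw [hceq, hFv] at he2
      unfold cnt at he1 he2 hcard
      omega
    · have hm : pu l a (Phi l a f) k ≤ pu l a (Phi l a f) (k+1) :=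
        pu_mono hF hFnz (by omega)
      omega

lemma key2 (hFnz : 1 ≤ Phi l a f 0 0) : rank l a (Phi l a f) ≤ rank l a f := by
  have hc0 := c0_phi_le h hnz
  rcases Nat.eq_or_lt_of_le hc0 with heq | hlt
  · have hpu := pu_phi_ge h hnz hFnz heq (c0 a f + 1) le_rfl
    unfold rank r0
    rw [heq]
    omega
  · unfold rank
    have hmul : (c0 a (Phi l a f) + 1) * l ≤ c0 a f * l :=
      Nat.mul_le_mul_right _ (by omega)
    have hexp : (c0 a (Phi l a f) + 1) * l = c0 a (Phi l a f) * l + l := by ring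
    omega

lemma rank_lt : rank l a f < l * a := by
  have hca := c0_lt_a h hnz
  have hl : 0 < l := by
    by_contra h0
    have := h.2.2.1 0 0 (by omega)
    omega
  have hmul : (c0 a f + 1) * l ≤ a * l := Nat.mul_le_mul_right _ (by omega)
  have hexp : (c0 a f + 1) * l = c0 a f * l + l := by ring
  have hcomm : a * l = l * a := Nat.mul_comm a l
  unfold rank
  omega

end Inverse

section WtZero

variable {f : ℕ → ℕ → ℕ} (h : IsPP l a f)
include h

lemma f00_le_wt (hl : 0 < l) (ha : 0 < a) : f 0 0 ≤ wt l a f := by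
  unfold wt
  calc f 0 0 ≤ ∑ y ∈ range a, f 0 y :=
        Finset.single_le_sum (f := fun y => f 0 y) (fun y _ => Nat.zero_le _)
          (Finset.mem_range.2 ha)
    _ ≤ ∑ x ∈ range l, ∑ y ∈ range a, f x y :=
        Finset.single_le_sum (f := fun x => ∑ y ∈ range a, f x y)
          (fun x _ => Nat.zero_le _) (Finset.mem_range.2 hl)

lemma wt_zero (h0 : f 0 0 = 0) : wt l a f = 0 := by
  unfold wt
  refine Finset.sum_eq_zero fun x _ => Finset.sum_eq_zero fun y _ => zero_of_f00 h h0 x y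

end WtZero

/-! ### Counting -/

def hookOf (l ρ : ℕ) : ℕ := ρ / l + (l - 1 - ρ % l) + 1

section Counting

variable {k t : ℕ}

lemma entry_le_wt {f : ℕ → ℕ → ℕ} (h : IsPP l a f) {x y : ℕ} (hx : x < l) (hy : y < a) :
    f x y ≤ wt l a f :=
  (le_f00 h x y).trans (f00_le_wt h (by omega) (by omega))

lemma finite_aux (l a k : ℕ) (P : (ℕ → ℕ → ℕ) → Prop) :
    Finite {f : ℕ → ℕ → ℕ // (IsPP l a f ∧ wt l a f = k) ∧ P f} := by
  apply Finite.of_injective (β := Fin l → Fin a → Fin (k+1))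
    (f := fun g => fun x y => ⟨g.1 x y, by
      have h1 := entry_le_wt g.2.1.1 x.2 y.2
      have h2 := g.2.1.2
      omega⟩)
  rintro ⟨g, hg⟩ ⟨g', hg'⟩ he
  ext x y
  simp only at he
  show g x y = g' x y
  by_cases hbox : x < l ∧ y < a
  · have := congrFun (congrFun he ⟨x, hbox.1⟩) ⟨y, hbox.2⟩
    simpa using this
  · rcases Nat.lt_or_ge x l with hx | hx
    · have hy : a ≤ y := by omega
      rw [hg.1.1.2.2.2 x y hy, hg'.1.1.2.2.2 x y hy]
    · rw [hg.1.1.2.2.1 x y hx, hg'.1.1.2.2.1 x y hx]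

/-- the number of plane partitions of `k` in the box whose Hillman–Grassl
rank is `< t` -/
noncomputable def Nc (l a k t : ℕ) : ℕ :=
  Nat.card {f : ℕ → ℕ → ℕ // IsPP l a f ∧ wt l a f = k ∧ (k = 0 ∨ rank l a f < t)}

lemma nz_of_wt {f : ℕ → ℕ → ℕ} (h : IsPP l a f) (hw : wt l a f ≠ 0) : 1 ≤ f 0 0 := by
  by_contra h0
  exact hw (wt_zero h (by omega))

lemma hook_rank {f : ℕ → ℕ → ℕ} (h : IsPP l a f) (hnz : 1 ≤ f 0 0) :
    hookOf l (rank l a f) = r0 l a f + c0 a f + 1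
      ∧ rank l a f / l = c0 a f ∧ l - 1 - rank l a f % l = r0 l a f := by
  have hl : 0 < l := by
    by_contra h0
    have := h.2.2.1 0 0 (by omega)
    omega
  have hr0 := r0_lt_l h hnz
  have hmod : rank l a f % l = l - 1 - r0 l a f := by
    unfold rank
    rw [Nat.mul_comm (c0 a f) l, Nat.mul_add_mod]
    exact Nat.mod_eq_of_lt (by omega)
  have hdiv : rank l a f / l = c0 a f := by
    unfold rank
    rw [Nat.add_comm, Nat.add_mul_div_right _ _ hl, Nat.div_eq_of_lt (by omega)]
    omega
  refine ⟨?_, hdiv, by omega⟩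
  unfold hookOf
  rw [hmod, hdiv]
  omega

lemma rank_le_cases {g : ℕ → ℕ → ℕ} (hg : IsPP l a g) (hgnz : 1 ≤ g 0 0)
    {r c : ℕ} (hrl : r < l)
    (hrle : rank l a g ≤ c * l + (l - 1 - r)) :
    c0 a g < c ∨ (c0 a g = c ∧ r ≤ r0 l a g) := by
  have hr0 := r0_lt_l hg hgnz
  rcases Nat.lt_trichotomy (c0 a g) c with hlt | heq | hgt
  · exact Or.inl hlt
  · refine Or.inr ⟨heq, ?_⟩
    unfold rank at hrle
    rw [heq] at hrle
    omega
  · exfalso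
    have hmul : (c + 1) * l ≤ c0 a g * l := Nat.mul_le_mul_right _ (by omega)
    have hexp : (c + 1) * l = c * l + l := by ring
    unfold rank at hrle
    omega

lemma card_subtype_or {P Q R : (ℕ → ℕ → ℕ) → Prop}
    (hfin1 : Finite {f : ℕ → ℕ → ℕ // P f ∧ Q f})
    (hfin2 : Finite {f : ℕ → ℕ → ℕ // P f ∧ R f})
    (hdisj : ∀ f, Q f → R f → False) :
    Nat.card {f : ℕ → ℕ → ℕ // P f ∧ (Q f ∨ R f)}
      = Nat.card {f : ℕ → ℕ → ℕ // P f ∧ Q f}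
        + Nat.card {f : ℕ → ℕ → ℕ // P f ∧ R f} := by
  classical
  rw [← Nat.card_sum]
  apply Nat.card_congr
  refine ⟨fun x => if hq : Q x.1 then Sum.inl ⟨x.1, x.2.1, hq⟩
      else Sum.inr ⟨x.1, x.2.1, x.2.2.resolve_left hq⟩,
    Sum.elim (fun y => ⟨y.1, y.2.1, Or.inl y.2.2⟩) (fun y => ⟨y.1, y.2.1, Or.inr y.2.2⟩),
    ?_, ?_⟩
  · intro x
    by_cases hq : Q x.1
    · simp only [dif_pos hq]
      exact Subtype.ext rfl
    · simp only [dif_neg hq]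
      exact Subtype.ext rfl
  · rintro (y | y)
    · simp only [Sum.elim_inl, dif_pos y.2.2]
      exact dif_pos y.2.2
    · have hq : ¬ Q y.1 := fun hq => hdisj _ hq y.2.2
      simp only [Sum.elim_inr, dif_neg hq]
      exact dif_neg hq

variable (hl : 0 < l) (ha : 0 < a)
include hl ha

lemma core_peel (hk : 0 < k) (ht : t < l * a) (hh : hookOf l t ≤ k) :
    Nat.card {f : ℕ → ℕ → ℕ // IsPP l a f ∧ wt l a f = k ∧ rank l a f = t}
      = Nc l a (k - hookOf l t) (t+1) := by
  have hml : t % l < l := Nat.mod_lt _ hl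
  have hrl : l - 1 - t % l < l := by omega
  have hca : t / l < a := by
    rw [Nat.div_lt_iff_lt_mul hl, Nat.mul_comm]
    exact ht
  have hcm : t / l * l = l * (t / l) := Nat.mul_comm _ _
  have hdm := Nat.div_add_mod t l
  have ht_eq : t / l * l + (l - 1 - (l - 1 - t % l)) = t := by omega
  have hhook : hookOf l t = t / l + (l - 1 - t % l) + 1 := rfl
  apply Nat.card_congr
  refine ⟨fun x => ⟨Phi l a x.1, by
      obtain ⟨f, hP, hw, hrk⟩ := x
      show IsPP l a (Phi l a f) ∧ wt l a (Phi l a f) = k - hookOf l t ∧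
        (k - hookOf l t = 0 ∨ rank l a (Phi l a f) < t + 1)
      have hnz : 1 ≤ f 0 0 := nz_of_wt hP (by omega)
      have hHR := (hook_rank hP hnz).1
      have hwp := wt_phi hP hnz
      refine ⟨phi_isPP hP hnz, by rw [← hrk]; omega, ?_⟩
      by_cases h0 : wt l a (Phi l a f) = 0
      · left
        rw [← hrk]
        omega
      · right
        have hgnz : 1 ≤ Phi l a f 0 0 := nz_of_wt (phi_isPP hP hnz) h0
        have := key2 hP hnz hgnz
        omega⟩,
    fun y => ⟨Psi l y.1 (l - 1 - t % l) (t / l), by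
      obtain ⟨g, hQ, hwg, hcond⟩ := y
      show IsPP l a (Psi l g (l - 1 - t % l) (t / l)) ∧
        wt l a (Psi l g (l - 1 - t % l) (t / l)) = k ∧
        rank l a (Psi l g (l - 1 - t % l) (t / l)) = t
      have hcnd : 1 ≤ g 0 0 →
          (c0 a g < t / l ∨ (c0 a g = t / l ∧ l - 1 - t % l ≤ r0 l a g)) := by
        intro hgnz
        have hw0 : wt l a g ≠ 0 := by
          have := f00_le_wt hQ hl ha
          omega
        have hrle : rank l a g ≤ t := by
          rcases hcond with h0 | h1 <;> omega
        exact rank_le_cases hQ hgnz hrl (by omega)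
      refine ⟨psi_isPP (h := hQ) (hr := hrl) (hc := hca), ?_, ?_⟩
      · have := wt_psi (h := hQ) (hr := hrl) (hc := hca) (hcond := hcnd)
        omega
      · have hc0 := c0_psi (h := hQ) (hr := hrl) (hc := hca) (hcond := hcnd)
        have hr0 := r0_psi (h := hQ) (hr := hrl) (hc := hca) (hcond := hcnd)
        unfold rank
        rw [hc0, hr0]
        omega⟩,
    ?_, ?_⟩
  · rintro ⟨f, hP, hw, hrk⟩
    have hnz : 1 ≤ f 0 0 := nz_of_wt hP (by omega)
    have hHR := hook_rank hP hnz
    apply Subtype.ext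
    show Psi l (Phi l a f) (l - 1 - t % l) (t / l) = f
    have e1 : l - 1 - t % l = r0 l a f := by rw [← hrk]; exact hHR.2.2
    have e2 : t / l = c0 a f := by rw [← hrk]; exact hHR.2.1
    rw [e1, e2]
    exact psi_phi hP hnz
  · rintro ⟨g, hQ, hwg, hcond⟩
    have hcnd : 1 ≤ g 0 0 →
        (c0 a g < t / l ∨ (c0 a g = t / l ∧ l - 1 - t % l ≤ r0 l a g)) := by
      intro hgnz
      have hw0 : wt l a g ≠ 0 := by
        have := f00_le_wt hQ hl ha
        omega
      have hrle : rank l a g ≤ t := by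
        rcases hcond with h0 | h1 <;> omega
      exact rank_le_cases hQ hgnz hrl (by omega)
    apply Subtype.ext
    show Phi l a (Psi l g (l - 1 - t % l) (t / l)) = g
    exact phi_psi (h := hQ) (hr := hrl) (hc := hca) (hcond := hcnd)

lemma core1 (hk : 0 < k) (ht : t < l * a) (hh : hookOf l t ≤ k) :
    Nc l a k (t+1) = Nc l a k t + Nc l a (k - hookOf l t) (t+1) := by
  rw [← core_peel hl ha hk ht hh]
  unfold Nc
  have e0 : ∀ f : ℕ → ℕ → ℕ,
      (IsPP l a f ∧ wt l a f = k ∧ (k = 0 ∨ rank l a f < t + 1))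
        ↔ ((IsPP l a f ∧ wt l a f = k) ∧ ((k = 0 ∨ rank l a f < t) ∨ rank l a f = t)) := by
    intro f
    constructor
    · rintro ⟨h1, h2, h3⟩
      exact ⟨⟨h1, h2⟩, by omega⟩
    · rintro ⟨⟨h1, h2⟩, h3⟩
      refine ⟨h1, h2, ?_⟩
      rcases h3 with h3 | h3 <;> omega
  rw [Nat.card_congr (Equiv.subtypeEquivRight e0)]
  rw [card_subtype_or (finite_aux l a k _) (finite_aux l a k _)
    (fun f hq hr => by rcases hq with h | h <;> omega)]
  congr 1
  · apply Nat.card_congr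
    apply Equiv.subtypeEquivRight
    intro f
    constructor
    · rintro ⟨⟨h1, h2⟩, h3⟩; exact ⟨h1, h2, h3⟩
    · rintro ⟨h1, h2, h3⟩; exact ⟨⟨h1, h2⟩, h3⟩
  · apply Nat.card_congr
    apply Equiv.subtypeEquivRight
    intro f
    constructor
    · rintro ⟨⟨h1, h2⟩, h3⟩; exact ⟨h1, h2, h3⟩
    · rintro ⟨h1, h2, h3⟩; exact ⟨⟨h1, h2⟩, h3⟩

omit hl ha in
lemma core2 (hk : 0 < k) (hh : k < hookOf l t) :
    Nc l a k (t+1) = Nc l a k t := by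
  unfold Nc
  apply Nat.card_congr
  apply Equiv.subtypeEquivRight
  intro f
  constructor
  · rintro ⟨h1, h2, h3⟩
    refine ⟨h1, h2, ?_⟩
    rcases h3 with h0 | hlt
    · omega
    · right
      rcases Nat.lt_or_ge (rank l a f) t with h' | h'
      · exact h'
      · exfalso
        have hrk : rank l a f = t := by omega
        have hnz : 1 ≤ f 0 0 := nz_of_wt h1 (by omega)
        have hHR := (hook_rank h1 hnz).1
        have hwp := wt_phi h1 hnz
        rw [hrk] at hHR
        omega
  · rintro ⟨h1, h2, h3⟩
    refine ⟨h1, h2, ?_⟩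
    rcases h3 with h3 | h3 <;> omega

omit hl ha in
lemma isPP_zero : IsPP l a (fun _ _ => 0) :=
  ⟨fun _ _ => le_rfl, fun _ _ => le_rfl, fun _ _ _ => rfl, fun _ _ _ => rfl⟩

omit hl ha in
lemma Nc_start (hk : 0 < k) : Nc l a k 0 = 0 := by
  unfold Nc
  have : IsEmpty {f : ℕ → ℕ → ℕ // IsPP l a f ∧ wt l a f = k ∧ (k = 0 ∨ rank l a f < 0)} :=
    ⟨fun x => by rcases x.2.2.2 with h | h <;> omega⟩
  exact Nat.card_of_isEmpty

lemma Nc_zero (t : ℕ) : Nc l a 0 t = 1 := by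
  unfold Nc
  have e : {f : ℕ → ℕ → ℕ // IsPP l a f ∧ wt l a f = 0 ∧ ((0:ℕ) = 0 ∨ rank l a f < t)}
      ≃ Unit := by
    refine ⟨fun _ => Unit.unit,
      fun _ => ⟨fun _ _ => 0, isPP_zero, wt_zero isPP_zero rfl, Or.inl rfl⟩,
      ?_, fun _ => rfl⟩
    rintro ⟨f, hP, hw, _⟩
    apply Subtype.ext
    funext x y
    exact (zero_of_f00 hP (by have := f00_le_wt hP hl ha; omega) x y).symm
  rw [Nat.card_congr e]
  simp

omit hl ha in
lemma Nc_top (ht : l * a ≤ t) : Nc l a k t = Nc l a k (l * a) := by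
  unfold Nc
  apply Nat.card_congr
  apply Equiv.subtypeEquivRight
  intro f
  constructor
  · rintro ⟨h1, h2, h3⟩
    refine ⟨h1, h2, ?_⟩
    by_cases hk0 : k = 0
    · exact Or.inl hk0
    · exact Or.inr (rank_lt h1 (nz_of_wt h1 (by omega)))
  · rintro ⟨h1, h2, h3⟩
    refine ⟨h1, h2, ?_⟩
    by_cases hk0 : k = 0
    · exact Or.inl hk0
    · have := rank_lt h1 (nz_of_wt h1 (by omega))
      omega

end Counting

section GF

lemma hook_pos (l ρ : ℕ) : 1 ≤ hookOf l ρ := Nat.le_add_left 1 _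

lemma gf_rec {l a : ℕ} (hl : 0 < l) (ha : 0 < a) :
    ∀ t, t ≤ l * a →
      (PowerSeries.mk fun k => (Nc l a k t : ℚ))
          * ∏ ρ ∈ range t, (1 - (PowerSeries.X : PowerSeries ℚ) ^ (hookOf l ρ)) = 1 := by
  intro t
  induction t with
  | zero =>
    intro _
    rw [Finset.prod_range_zero, mul_one]
    ext k
    rw [PowerSeries.coeff_mk, PowerSeries.coeff_one]
    rcases Nat.eq_zero_or_pos k with rfl | hk
    · rw [Nc_zero hl ha 0, if_pos rfl]
      norm_num
    · rw [Nc_start hk, if_neg (by omega)]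
      norm_num
  | succ t ih =>
    intro ht1
    have ht : t < l * a := by omega
    have key : (PowerSeries.mk fun k => (Nc l a k (t+1) : ℚ))
        * (1 - PowerSeries.X ^ hookOf l t)
        = PowerSeries.mk fun k => (Nc l a k t : ℚ) := by
      ext k
      rw [mul_sub, mul_one, map_sub, PowerSeries.coeff_mul_X_pow']
      simp only [PowerSeries.coeff_mk]
      by_cases hh : hookOf l t ≤ k
      · rw [if_pos hh]
        rcases Nat.eq_zero_or_pos k with rfl | hk
        · have := hook_pos l t
          omega
        · rw [core1 hl ha hk ht hh]
          push_cast
          ring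
      · rw [if_neg hh, sub_zero]
        rcases Nat.eq_zero_or_pos k with rfl | hk
        · rw [Nc_zero hl ha (t+1), Nc_zero hl ha t]
        · rw [core2 hk (by omega)]
    calc (PowerSeries.mk fun k => (Nc l a k (t+1) : ℚ))
        * ∏ ρ ∈ range (t+1), (1 - (PowerSeries.X : PowerSeries ℚ) ^ (hookOf l ρ))
        = ((PowerSeries.mk fun k => (Nc l a k (t+1) : ℚ))
            * (1 - PowerSeries.X ^ hookOf l t))
          * ∏ ρ ∈ range t, (1 - (PowerSeries.X : PowerSeries ℚ) ^ (hookOf l ρ)) := by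
          rw [Finset.prod_range_succ]
          ring
      _ = 1 := by
          rw [key]
          exact ih (by omega)

end GF

section ProdId

open PowerSeries

lemma prod_range_mul {M : Type*} [CommMonoid M] (g : ℕ → M) (n m : ℕ) :
    ∏ ρ ∈ range (n * m), g ρ = ∏ i ∈ range n, ∏ j ∈ range m, g (i * m + j) := by
  induction n with
  | zero => simp
  | succ n ih =>
    rw [Nat.succ_mul, Finset.prod_range_add, ih, Finset.prod_range_succ]

lemma hook_prod {l a : ℕ} (hl : 0 < l) :
    ∏ ρ ∈ range (l * a), (1 - (X : PowerSeries ℚ) ^ (hookOf l ρ))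
      = ∏ p ∈ (range a) ×ˢ (range l), (1 - (X : PowerSeries ℚ) ^ (p.1 + p.2 + 1)) := by
  rw [Nat.mul_comm, prod_range_mul, Finset.prod_product]
  apply Finset.prod_congr rfl
  intro c _
  have hin : ∀ j ∈ range l, (1 - (X : PowerSeries ℚ) ^ (hookOf l (c * l + j)))
      = (1 - (X : PowerSeries ℚ) ^ (c + (l - 1 - j) + 1)) := by
    intro j hj
    simp only [Finset.mem_range] at hj
    have hdiv : (c * l + j) / l = c := by
      rw [Nat.add_comm, Nat.add_mul_div_right _ _ hl, Nat.div_eq_of_lt hj]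
      omega
    have hmod : (c * l + j) % l = j := by
      rw [Nat.mul_comm, Nat.mul_add_mod]
      exact Nat.mod_eq_of_lt hj
    unfold hookOf
    rw [hdiv, hmod]
  rw [Finset.prod_congr rfl hin]
  exact Finset.prod_range_reflect (fun x => (1 - (X : PowerSeries ℚ) ^ (c + x + 1))) l

lemma box_prod {l a : ℕ} :
    ∏ p ∈ (range a) ×ˢ (range l), (1 - (X : PowerSeries ℚ) ^ (p.1 + p.2 + 1))
      = ∏ b ∈ Finset.Icc 1 (a + l),
          (1 - (X : PowerSeries ℚ) ^ b) ^ (min a b - (b - l)) := by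
  rw [← Finset.prod_fiberwise_of_maps_to (g := fun p : ℕ × ℕ => p.1 + p.2 + 1)
    (t := Finset.Icc 1 (a + l))
    (fun p hp => by
      simp only [Finset.mem_product, Finset.mem_range] at hp
      simp only [Finset.mem_Icc]
      omega)]
  apply Finset.prod_congr rfl
  intro b hb
  simp only [Finset.mem_Icc] at hb
  have hconst : ∀ p ∈ ((range a) ×ˢ (range l)).filter (fun p => p.1 + p.2 + 1 = b),
      (1 - (X : PowerSeries ℚ) ^ (p.1 + p.2 + 1)) = (1 - (X : PowerSeries ℚ) ^ b) := by
    intro p hp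
    simp only [Finset.mem_filter] at hp
    rw [hp.2]
  rw [Finset.prod_congr rfl hconst, Finset.prod_const]
  congr 1
  have himg : ((range a) ×ˢ (range l)).filter (fun p => p.1 + p.2 + 1 = b)
      = (Finset.Ico (b - l) (min a b)).image (fun c => (c, b - 1 - c)) := by
    ext p
    simp only [Finset.mem_filter, Finset.mem_product, Finset.mem_range,
      Finset.mem_image, Finset.mem_Ico]
    constructor
    · rintro ⟨⟨h1, h2⟩, h3⟩
      refine ⟨p.1, by omega, ?_⟩
      rw [Prod.ext_iff]
      constructor
      · rfl
      · simp only
        omega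
    · rintro ⟨c, ⟨hc1, hc2⟩, rfl⟩
      simp only
      omega
  rw [himg, Finset.card_image_of_injective _ (fun x y hxy => (Prod.ext_iff.1 hxy).1),
    Nat.card_Ico]

lemma stated_prod {l a : ℕ} (hl : 0 < l) (ha : 0 < a) :
    ((∏ j ∈ Finset.Icc (min a l) (max a l), (1 - (X : PowerSeries ℚ) ^ j) ^ (min a l)) *
      ∏ i ∈ Finset.Icc 1 (min a l - 1),
        ((1 - (X : PowerSeries ℚ) ^ i) ^ i
          * (1 - (X : PowerSeries ℚ) ^ (max a l + i)) ^ (min a l - i)))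
    = ∏ b ∈ Finset.Icc 1 (a + l),
        (1 - (X : PowerSeries ℚ) ^ b) ^ (min a b - (b - l)) := by
  have hms : min a l + max a l = a + l := min_add_max a l
  have hm1 : 1 ≤ min a l := by omega
  have e1 : (∏ j ∈ Finset.Icc (min a l) (max a l), (1 - (X : PowerSeries ℚ) ^ j) ^ (min a l))
      = ∏ b ∈ Finset.Icc 1 (a + l), (1 - (X : PowerSeries ℚ) ^ b) ^
          (if min a l ≤ b ∧ b ≤ max a l then min a l else 0) := by
    calc ∏ j ∈ Finset.Icc (min a l) (max a l), (1 - (X : PowerSeries ℚ) ^ j) ^ (min a l)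
        = ∏ j ∈ Finset.Icc (min a l) (max a l), (1 - (X : PowerSeries ℚ) ^ j) ^
            (if min a l ≤ j ∧ j ≤ max a l then min a l else 0) := by
          apply Finset.prod_congr rfl
          intro j hj
          simp only [Finset.mem_Icc] at hj
          rw [if_pos hj]
      _ = _ := Finset.prod_subset (Finset.Icc_subset_Icc hm1 (by omega))
          (fun b _ hnb => by
            rw [if_neg (by simpa [Finset.mem_Icc] using hnb), pow_zero])
  have e2 : (∏ i ∈ Finset.Icc 1 (min a l - 1), (1 - (X : PowerSeries ℚ) ^ i) ^ i)
      = ∏ b ∈ Finset.Icc 1 (a + l), (1 - (X : PowerSeries ℚ) ^ b) ^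
          (if 1 ≤ b ∧ b ≤ min a l - 1 then b else 0) := by
    calc ∏ i ∈ Finset.Icc 1 (min a l - 1), (1 - (X : PowerSeries ℚ) ^ i) ^ i
        = ∏ i ∈ Finset.Icc 1 (min a l - 1), (1 - (X : PowerSeries ℚ) ^ i) ^
            (if 1 ≤ i ∧ i ≤ min a l - 1 then i else 0) := by
          apply Finset.prod_congr rfl
          intro i hi
          simp only [Finset.mem_Icc] at hi
          rw [if_pos hi]
      _ = _ := Finset.prod_subset (Finset.Icc_subset_Icc le_rfl (by omega))
          (fun b _ hnb => by
            rw [if_neg (by simpa [Finset.mem_Icc] using hnb), pow_zero])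
  have e3 : (∏ i ∈ Finset.Icc 1 (min a l - 1),
        (1 - (X : PowerSeries ℚ) ^ (max a l + i)) ^ (min a l - i))
      = ∏ b ∈ Finset.Icc 1 (a + l), (1 - (X : PowerSeries ℚ) ^ b) ^
          (if max a l + 1 ≤ b ∧ b ≤ max a l + (min a l - 1)
            then min a l - (b - max a l) else 0) := by
    have hmap : (Finset.Icc 1 (min a l - 1)).map (addLeftEmbedding (max a l))
        = Finset.Icc (max a l + 1) (max a l + (min a l - 1)) :=
      Finset.map_add_left_Icc _ _ _
    calc ∏ i ∈ Finset.Icc 1 (min a l - 1),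
          (1 - (X : PowerSeries ℚ) ^ (max a l + i)) ^ (min a l - i)
        = ∏ i ∈ Finset.Icc 1 (min a l - 1),
            (1 - (X : PowerSeries ℚ) ^ (max a l + i)) ^ (min a l - (max a l + i - max a l)) := by
          apply Finset.prod_congr rfl
          intro i _
          congr 1
          omega
      _ = ∏ b ∈ Finset.Icc (max a l + 1) (max a l + (min a l - 1)),
            (1 - (X : PowerSeries ℚ) ^ b) ^ (min a l - (b - max a l)) := by
          rw [← hmap, Finset.prod_map]
          apply Finset.prod_congr rfl
          intro i _
          simp only [addLeftEmbedding_apply]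
      _ = ∏ b ∈ Finset.Icc (max a l + 1) (max a l + (min a l - 1)),
            (1 - (X : PowerSeries ℚ) ^ b) ^
              (if max a l + 1 ≤ b ∧ b ≤ max a l + (min a l - 1)
                then min a l - (b - max a l) else 0) := by
          apply Finset.prod_congr rfl
          intro b hb
          simp only [Finset.mem_Icc] at hb
          rw [if_pos hb]
      _ = _ := Finset.prod_subset (Finset.Icc_subset_Icc (by omega) (by omega))
          (fun b _ hnb => by
            rw [if_neg (by simpa [Finset.mem_Icc] using hnb), pow_zero])
  rw [Finset.prod_mul_distrib, e1, e2, e3, ← Finset.prod_mul_distrib,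
    ← Finset.prod_mul_distrib]
  apply Finset.prod_congr rfl
  intro b hb
  simp only [Finset.mem_Icc] at hb
  rw [← pow_add, ← pow_add]
  congr 1
  split_ifs <;> omega

end ProdId

section Main

lemma count_eq_Nc {l a : ℕ} (hl : 0 < l) (ha : 0 < a) (k : ℕ) :
    rectPlanePartitionCount l a k = Nc l a k (l * a) := by
  unfold rectPlanePartitionCount Nc
  apply Nat.card_congr
  refine ⟨fun F => ⟨fun x y => if h : x < l ∧ y < a then F.1 ⟨x, h.1⟩ ⟨y, h.2⟩ else 0, ?_⟩,
    fun G => ⟨fun i j => G.1 i j, ?_⟩, ?_, ?_⟩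
  · obtain ⟨F, hrow, hcol, hsum⟩ := F
    simp only
    have hPP : IsPP l a (fun x y => if h : x < l ∧ y < a then F ⟨x, h.1⟩ ⟨y, h.2⟩ else 0) := by
      refine ⟨?_, ?_, ?_, ?_⟩
      · intro x y
        beta_reduce
        by_cases h1 : x + 1 < l ∧ y < a
        · rw [dif_pos h1, dif_pos ⟨by omega, h1.2⟩]
          exact hcol ⟨y, h1.2⟩ ⟨x, by omega⟩ ⟨x+1, h1.1⟩ (by simp [Fin.mk_le_mk])
        · rw [dif_neg h1]
          exact Nat.zero_le _
      · intro x y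
        beta_reduce
        by_cases h1 : x < l ∧ y + 1 < a
        · rw [dif_pos h1, dif_pos ⟨h1.1, by omega⟩]
          exact hrow ⟨x, h1.1⟩ ⟨y, by omega⟩ ⟨y+1, h1.2⟩ (by simp [Fin.le_def])
        · rw [dif_neg h1]
          exact Nat.zero_le _
      · intro x y hx
        beta_reduce
        rw [dif_neg (by omega)]
      · intro x y hy
        beta_reduce
        rw [dif_neg (by omega)]
    have hwt : wt l a (fun x y => if h : x < l ∧ y < a then F ⟨x, h.1⟩ ⟨y, h.2⟩ else 0)
        = ∑ i, ∑ j, F i j := by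
      unfold wt
      rw [← Fin.sum_univ_eq_sum_range
        (fun x => ∑ y ∈ range a, if h : x < l ∧ y < a then F ⟨x, h.1⟩ ⟨y, h.2⟩ else 0) l]
      apply Finset.sum_congr rfl
      intro i _
      rw [← Fin.sum_univ_eq_sum_range
        (fun y => if h : ↑i < l ∧ y < a then F ⟨↑i, h.1⟩ ⟨y, h.2⟩ else 0) a]
      apply Finset.sum_congr rfl
      intro j _
      beta_reduce
      rw [dif_pos ⟨i.2, j.2⟩]
    refine ⟨hPP, by rw [hwt, hsum], ?_⟩
    by_cases hk0 : k = 0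
    · exact Or.inl hk0
    · refine Or.inr (rank_lt hPP (nz_of_wt hPP ?_))
      rw [hwt, hsum]
      exact hk0
  · obtain ⟨G, hG, hwt, _⟩ := G
    simp only
    refine ⟨?_, ?_, ?_⟩
    · intro i j j' hjj
      exact mono_y hG _ (by exact_mod_cast hjj)
    · intro j i i' hii
      exact mono_x hG _ (by exact_mod_cast hii)
    · rw [← hwt]
      unfold wt
      rw [← Fin.sum_univ_eq_sum_range (fun x => ∑ y ∈ range a, G x y) l]
      apply Finset.sum_congr rfl
      intro i _
      rw [← Fin.sum_univ_eq_sum_range (fun y => G ↑i y) a]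
  · rintro ⟨F, hF⟩
    apply Subtype.ext
    funext i j
    show (if h : ↑i < l ∧ ↑j < a then F ⟨↑i, h.1⟩ ⟨↑j, h.2⟩ else 0) = F i j
    rw [dif_pos ⟨i.2, j.2⟩]
  · rintro ⟨G, hG⟩
    apply Subtype.ext
    funext x y
    show (if h : x < l ∧ y < a then G x y else 0) = G x y
    by_cases h1 : x < l ∧ y < a
    · rw [dif_pos h1]
    · rw [dif_neg h1]
      rcases Nat.lt_or_ge x l with hx | hx
      · exact (hG.1.2.2.2 x y (by omega)).symm
      · exact (hG.1.2.2.1 x y hx).symm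

lemma count_degenerate {l a : ℕ} (h0 : l = 0 ∨ a = 0) (k : ℕ) :
    rectPlanePartitionCount l a k = if k = 0 then 1 else 0 := by
  unfold rectPlanePartitionCount
  have hsum : ∀ F : Fin l → Fin a → ℕ, ∑ i, ∑ j, F i j = 0 := by
    intro F
    rcases h0 with rfl | rfl <;> simp
  have hext : ∀ (F G : Fin l → Fin a → ℕ), F = G := by
    intro F G
    funext i j
    rcases h0 with rfl | rfl
    · exact i.elim0
    · exact j.elim0
  rcases Nat.eq_zero_or_pos k with rfl | hk
  · rw [if_pos rfl]
    have e : {f : Fin l → Fin a → ℕ //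
        (∀ i : Fin l, ∀ j j' : Fin a, j ≤ j' → f i j' ≤ f i j) ∧
        (∀ j : Fin a, ∀ i i' : Fin l, i ≤ i' → f i' j ≤ f i j) ∧
        ∑ i, ∑ j, f i j = 0} ≃ Unit :=
      ⟨fun _ => Unit.unit,
        fun _ => ⟨fun _ _ => 0, fun _ _ _ _ => le_rfl, fun _ _ _ _ => le_rfl, hsum _⟩,
        fun x => Subtype.ext (hext _ _), fun _ => rfl⟩
    rw [Nat.card_congr e]
    simp
  · rw [if_neg (by omega)]
    have : IsEmpty {f : Fin l → Fin a → ℕ //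
        (∀ i : Fin l, ∀ j j' : Fin a, j ≤ j' → f i j' ≤ f i j) ∧
        (∀ j : Fin a, ∀ i i' : Fin l, i ≤ i' → f i' j ≤ f i j) ∧
        ∑ i, ∑ j, f i j = k} := ⟨fun x => by
      have := x.2.2.2
      rw [hsum x.1] at this
      omega⟩
    exact Nat.card_of_isEmpty

end Main

end RPP

theorem rectPlanePartition_genFun (l a : ℕ) :
    (PowerSeries.mk fun k => (rectPlanePartitionCount l a k : ℚ)) *
        ((∏ j ∈ Finset.Icc (min a l) (max a l), (1 - X ^ j) ^ (min a l)) *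
          ∏ i ∈ Finset.Icc 1 (min a l - 1),
            ((1 - X ^ i) ^ i * (1 - X ^ (max a l + i)) ^ (min a l - i))) = 1 := by
  by_cases h0 : l = 0 ∨ a = 0
  · have hm : min a l = 0 := by rcases h0 with rfl | rfl <;> simp
    rw [hm]
    simp only [pow_zero, Finset.prod_const_one, one_mul]
    rw [show (0:ℕ) - 1 = 0 by rfl, Finset.Icc_eq_empty (by omega), Finset.prod_empty, mul_one]
    have : (PowerSeries.mk fun k => (rectPlanePartitionCount l a k : ℚ)) = 1 := by
      ext k
      rw [PowerSeries.coeff_mk, PowerSeries.coeff_one, RPP.count_degenerate h0 k]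
      split_ifs <;> norm_num
    rw [this]
  · push_neg at h0
    have hl : 0 < l := by omega
    have ha : 0 < a := by omega
    have hmk : (PowerSeries.mk fun k => (rectPlanePartitionCount l a k : ℚ))
        = PowerSeries.mk fun k => (RPP.Nc l a k (l * a) : ℚ) := by
      ext k
      rw [PowerSeries.coeff_mk, PowerSeries.coeff_mk, RPP.count_eq_Nc hl ha k]
    rw [hmk, RPP.stated_prod hl ha, ← RPP.box_prod, ← RPP.hook_prod hl]
    exact RPP.gf_rec hl ha (l * a) le_rfl
end

section
/- Fix a ≥ 1 and let p_a(k) be the number of plane partitions of k fitting inside a 2 × a rectangle. Then the sequence k ↦ p_a(k) is weakly increasing in k. -/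
/-- Number of plane partitions of `k` fitting inside a `2 × a` rectangle. -/
noncomputable def planePartitionCount (a k : ℕ) : ℕ :=
  Nat.card {f : Fin 2 → Fin a → ℕ //
    (∀ i : Fin 2, ∀ j j' : Fin a, j ≤ j' → f i j' ≤ f i j) ∧
    (∀ j : Fin a, f 1 j ≤ f 0 j) ∧
    ∑ i, ∑ j, f i j = k}

lemma pp_bound (a k : ℕ)
    (s : {f : Fin 2 → Fin a → ℕ //
      (∀ i : Fin 2, ∀ j j' : Fin a, j ≤ j' → f i j' ≤ f i j) ∧
      (∀ j : Fin a, f 1 j ≤ f 0 j) ∧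
      ∑ i, ∑ j, f i j = k}) (i : Fin 2) (j : Fin a) : s.1 i j ≤ k := by
  have h1 : s.1 i j ≤ ∑ j', s.1 i j' :=
    Finset.single_le_sum (fun _ _ => Nat.zero_le _) (Finset.mem_univ j)
  have h2 : ∑ j', s.1 i j' ≤ ∑ i', ∑ j', s.1 i' j' :=
    Finset.single_le_sum (f := fun i' => ∑ j', s.1 i' j') (fun _ _ => Nat.zero_le _)
      (Finset.mem_univ i)
  have h3 := s.2.2.2
  omega

lemma pp_finite (a k : ℕ) : Finite {f : Fin 2 → Fin a → ℕ //
    (∀ i : Fin 2, ∀ j j' : Fin a, j ≤ j' → f i j' ≤ f i j) ∧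
    (∀ j : Fin a, f 1 j ≤ f 0 j) ∧
    ∑ i, ∑ j, f i j = k} := by
  apply Finite.of_injective
    (fun s (i : Fin 2) (j : Fin a) =>
      (⟨s.1 i j, Nat.lt_succ_of_le (pp_bound a k s i j)⟩ : Fin (k+1)))
  intro s t h
  apply Subtype.ext
  funext i j
  have := congrFun (congrFun h i) j
  simpa [Fin.ext_iff] using this

theorem planePartitionCount_monotone_in_k (a : ℕ) (ha : 1 ≤ a) :
    Monotone (fun k => planePartitionCount a k) := by
  have key : ∀ k, planePartitionCount a k ≤ planePartitionCount a (k+1) := by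
    intro k
    have := pp_finite a (k+1)
    unfold planePartitionCount
    set j0 : Fin a := ⟨0, ha⟩ with hj0
    have hj0min : ∀ j : Fin a, j ≤ j0 → j = j0 := by
      intro j hj
      apply Fin.ext
      have := Fin.le_def.mp hj
      simpa [hj0] using this
    have prop1 : ∀ (s : {f : Fin 2 → Fin a → ℕ //
        (∀ i : Fin 2, ∀ j j' : Fin a, j ≤ j' → f i j' ≤ f i j) ∧
        (∀ j : Fin a, f 1 j ≤ f 0 j) ∧ ∑ i, ∑ j, f i j = k}),
        ∀ i : Fin 2, ∀ j j' : Fin a, j ≤ j' →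
        s.1 i j' + (if i = 0 ∧ j' = j0 then 1 else 0)
          ≤ s.1 i j + (if i = 0 ∧ j = j0 then 1 else 0) := by
      intro s i j j' hjj'
      have h1 := s.2.1 i j j' hjj'
      by_cases hc : i = 0 ∧ j' = j0
      · have hjeq : j = j0 := hj0min j (hc.2 ▸ hjj')
        simp [hc, hc.1, hjeq]
      · simp only [if_neg hc]
        exact le_trans (by omega) (Nat.le_add_right _ _)
    have prop2 : ∀ (s : {f : Fin 2 → Fin a → ℕ //
        (∀ i : Fin 2, ∀ j j' : Fin a, j ≤ j' → f i j' ≤ f i j) ∧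
        (∀ j : Fin a, f 1 j ≤ f 0 j) ∧ ∑ i, ∑ j, f i j = k}),
        ∀ j : Fin a,
        s.1 1 j + (if (1 : Fin 2) = 0 ∧ j = j0 then 1 else 0)
          ≤ s.1 0 j + (if (0 : Fin 2) = 0 ∧ j = j0 then 1 else 0) := by
      intro s j
      have h1 := s.2.2.1 j
      have h10 : ¬((1 : Fin 2) = 0 ∧ j = j0) := by
        rintro ⟨h, -⟩; exact absurd h (by decide)
      simp only [if_neg h10, add_zero]
      exact le_trans h1 (Nat.le_add_right _ _)
    have prop3 : ∀ (s : {f : Fin 2 → Fin a → ℕ //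
        (∀ i : Fin 2, ∀ j j' : Fin a, j ≤ j' → f i j' ≤ f i j) ∧
        (∀ j : Fin a, f 1 j ≤ f 0 j) ∧ ∑ i, ∑ j, f i j = k}),
        ∑ i, ∑ j, (s.1 i j + (if i = 0 ∧ j = j0 then 1 else 0)) = k + 1 := by
      intro s
      have hsum := s.2.2.2
      have hsplit : ∑ i, ∑ j, (s.1 i j + (if i = 0 ∧ j = j0 then 1 else 0))
          = (∑ i, ∑ j, s.1 i j)
            + ∑ i : Fin 2, ∑ j, (if i = 0 ∧ j = j0 then 1 else 0) := by
        rw [← Finset.sum_add_distrib]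
        congr 1
        ext i
        rw [← Finset.sum_add_distrib]
      rw [hsplit, hsum]
      congr 1
      have hinner : ∀ i : Fin 2, (∑ j, (if i = 0 ∧ j = j0 then 1 else 0))
          = (if i = 0 then 1 else 0) := by
        intro i
        by_cases hi : i = 0
        · simp [hi, Finset.sum_ite_eq']
        · simp [hi]
      simp [hinner, Fin.sum_univ_two]
    apply Nat.card_le_card_of_injective
      (fun s => ⟨fun i j => s.1 i j + (if i = 0 ∧ j = j0 then 1 else 0),
        prop1 s, prop2 s, prop3 s⟩)
    intro s t h
    apply Subtype.ext
    funext i j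
    have h2 := congrFun (congrFun (congrArg Subtype.val h) i) j
    simp only at h2
    by_cases hc : i = 0 ∧ j = j0
    · omega
    · simpa [hc] using h2
  exact monotone_nat_of_le_succ key
end

section
/- Let ℓ = lcm(1,...,a+1) and P_a(x) = (1-x^ℓ)^{2a} / ((1-x)(1-x²)²···(1-xᵃ)²(1-x^{a+1})), a polynomial of degree d = 2ℓa - a(a+2). Then the coefficients of P_a are nonnegative and palindromic: the coefficient of x^i equals the coefficient of x^{d-i} for all 0 ≤ i ≤ d. -/
open Polynomial Finset

noncomputable def gg (ℓ j : ℕ) : Polynomial ℚ := ∑ k ∈ range (ℓ / j), X ^ (j * k)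

lemma gg_mul (ℓ j : ℕ) (hd : j ∣ ℓ) :
    (1 - X ^ j) * gg ℓ j = 1 - X ^ ℓ := by
  have h : gg ℓ j = ∑ k ∈ range (ℓ / j), ((X : ℚ[X]) ^ j) ^ k := by
    simp [gg, pow_mul]
  have h2 : ((X : ℚ[X]) ^ j) ^ (ℓ / j) = X ^ ℓ := by
    rw [← pow_mul, Nat.mul_div_cancel' hd]
  rw [h, ← h2]
  linear_combination -(geom_sum_mul ((X:ℚ[X])^j) (ℓ / j))

lemma gg_coeff_nonneg (ℓ j : ℕ) : ∀ i, 0 ≤ (gg ℓ j).coeff i := by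
  intro i
  rw [gg, finset_sum_coeff]
  refine Finset.sum_nonneg fun k _ => ?_
  rw [coeff_X_pow]
  split <;> norm_num

lemma mul_coeff_nonneg {p q : ℚ[X]} (hp : ∀ i, 0 ≤ p.coeff i) (hq : ∀ i, 0 ≤ q.coeff i) :
    ∀ i, 0 ≤ (p * q).coeff i := by
  intro i
  rw [coeff_mul]
  exact Finset.sum_nonneg fun x _ => mul_nonneg (hp _) (hq _)

lemma one_coeff_nonneg : ∀ i, 0 ≤ (1 : ℚ[X]).coeff i := by
  intro i; rw [coeff_one]; split <;> norm_num

lemma gg_natDegree_le (ℓ j : ℕ) (hj : 0 < j) (hd : j ∣ ℓ) :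
    (gg ℓ j).natDegree ≤ ℓ - j := by
  refine natDegree_sum_le_of_forall_le _ _ fun k hk => ?_
  rw [natDegree_X_pow]
  rw [Finset.mem_range] at hk
  obtain ⟨c, rfl⟩ := hd
  have hc : 0 < c := by
    rcases Nat.eq_zero_or_pos c with h | h
    · subst h; simp at hk
    · exact h
  rw [Nat.mul_div_cancel_left _ hj] at hk
  have : k ≤ c - 1 := by omega
  calc j * k ≤ j * (c - 1) := Nat.mul_le_mul_left _ this
    _ = j * c - j := by rw [Nat.mul_sub_one]

lemma gg_reflect (ℓ j : ℕ) (hj : 0 < j) (hd : j ∣ ℓ) :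
    reflect (ℓ - j) (gg ℓ j) = gg ℓ j := by
  obtain ⟨c, rfl⟩ := hd
  rcases Nat.eq_zero_or_pos c with hc | hc
  · subst hc; simp [gg]
  have hn : (j * c) / j = c := Nat.mul_div_cancel_left _ hj
  have hsum : reflect (j * c - j) (gg (j*c) j) = ∑ k ∈ range c, (X : ℚ[X]) ^ revAt (j*c - j) (j * k) := by
    rw [gg, hn]
    induction (Finset.range c) using Finset.induction with
    | empty => simp
    | @insert x s h ih => rw [Finset.sum_insert h, Finset.sum_insert h, reflect_add, reflect_monomial, ih]
  rw [hsum]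
  have hrev : ∀ k ∈ range c, (X : ℚ[X]) ^ revAt (j*c - j) (j * k) = X ^ (j * (c - 1 - k)) := by
    intro k hk
    rw [Finset.mem_range] at hk
    have hle : j * k ≤ j * c - j := by
      have : j * k ≤ j * (c-1) := Nat.mul_le_mul_left _ (by omega)
      have h2 : j * (c - 1) = j * c - j := by
        cases c with
        | zero => omega
        | succ n => rw [Nat.succ_sub_one, Nat.mul_succ]; omega
      omega
    rw [revAt_le hle]
    congr 1
    have h2 : j * (c - 1) = j * c - j := by
      cases c with
      | zero => omega
      | succ n => rw [Nat.succ_sub_one, Nat.mul_succ]; omega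
    rw [Nat.mul_sub, h2]
  rw [Finset.sum_congr rfl hrev, gg, hn]
  rw [← Finset.sum_range_reflect (fun k => (X:ℚ[X]) ^ (j * k)) c]

lemma prod_coeff_nonneg {s : Finset ℕ} {f : ℕ → ℚ[X]}
    (h : ∀ j ∈ s, ∀ i, 0 ≤ (f j).coeff i) :
    ∀ i, 0 ≤ (∏ j ∈ s, f j).coeff i := by
  classical
  induction s using Finset.induction with
  | empty => simpa using one_coeff_nonneg
  | @insert j s hj ih =>
    rw [Finset.prod_insert hj]
    exact mul_coeff_nonneg (h j (Finset.mem_insert_self _ _))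
      (ih fun k hk i => h k (Finset.mem_insert_of_mem hk) i)

lemma reflect_prod {s : Finset ℕ} (f : ℕ → ℚ[X]) (N : ℕ → ℕ)
    (h : ∀ j ∈ s, (f j).natDegree ≤ N j) :
    reflect (∑ j ∈ s, N j) (∏ j ∈ s, f j) = ∏ j ∈ s, reflect (N j) (f j) := by
  classical
  induction s using Finset.induction with
  | empty => simp
  | @insert j s hj ih =>
    rw [Finset.prod_insert hj, Finset.sum_insert hj,
      reflect_mul _ _ (h j (Finset.mem_insert_self _ _))
        ((natDegree_prod_le _ _).trans (Finset.sum_le_sum fun k hk => h k (Finset.mem_insert_of_mem hk))),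
      ih fun k hk => h k (Finset.mem_insert_of_mem hk), Finset.prod_insert hj]

theorem clearedGenFun_coeffs_nonneg_palindrome (a : ℕ) (ha : 1 ≤ a)
    (ℓ : ℕ) (hℓ : ℓ = Finset.lcm (Finset.Icc 1 (a + 1)) id)
    (P : Polynomial ℚ)
    (hP : P * ((1 - X) * (∏ j ∈ Finset.Icc 2 a, (1 - X ^ j) ^ 2) * (1 - X ^ (a + 1))) =
      (1 - X ^ ℓ) ^ (2 * a)) :
    (∀ i : ℕ, 0 ≤ P.coeff i) ∧
      ∀ i : ℕ, i ≤ 2 * ℓ * a - a * (a + 2) →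
        P.coeff i = P.coeff (2 * ℓ * a - a * (a + 2) - i) := by
  -- divisibility facts
  have hdvd : ∀ j ∈ Finset.Icc 1 (a + 1), j ∣ ℓ := by
    intro j hj
    rw [hℓ]
    exact Finset.dvd_lcm hj
  have hd1 : 1 ∣ ℓ := hdvd 1 (by simp)
  have hda1 : (a + 1) ∣ ℓ := hdvd (a + 1) (by simp [Finset.mem_Icc])
  have hdj : ∀ j ∈ Finset.Icc 2 a, j ∣ ℓ := fun j hj => by
    rw [Finset.mem_Icc] at hj
    exact hdvd j (Finset.mem_Icc.2 ⟨by omega, by omega⟩)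
  have hℓpos : 0 < ℓ := by
    rcases Nat.eq_zero_or_pos ℓ with h | h
    · exfalso
      have h0 : (0 : ℕ) ∈ (id : ℕ → ℕ) '' ↑(Finset.Icc 1 (a+1)) :=
        Finset.lcm_eq_zero_iff.mp (h ▸ hℓ.symm)
      obtain ⟨j, hj, hj0⟩ := h0
      simp only [Finset.coe_Icc, Set.mem_Icc, id_eq] at hj hj0
      omega
    · exact h
  have hℓa : a + 1 ≤ ℓ := Nat.le_of_dvd hℓpos hda1
  -- the explicit polynomial
  set Pexp : ℚ[X] := gg ℓ 1 * (∏ j ∈ Finset.Icc 2 a, (gg ℓ j) ^ 2) * gg ℓ (a + 1) with hPexp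
  have hne : ∀ j : ℕ, 1 ≤ j → (1 - (X : ℚ[X]) ^ j) ≠ 0 := by
    intro j hj h
    have h2 := congrArg (eval 0) h
    simp [zero_pow (by omega : j ≠ 0)] at h2
  have hD : (1 - (X:ℚ[X])) * (∏ j ∈ Finset.Icc 2 a, (1 - X ^ j) ^ 2) * (1 - X ^ (a + 1)) ≠ 0 :=
    mul_ne_zero (mul_ne_zero (by simpa using hne 1 le_rfl)
      (Finset.prod_ne_zero_iff.2 fun j hj => pow_ne_zero _
        (hne j (by rw [Finset.mem_Icc] at hj; omega))))
      (hne (a + 1) (by omega))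
  have key : Pexp * ((1 - X) * (∏ j ∈ Finset.Icc 2 a, (1 - X ^ j) ^ 2) * (1 - X ^ (a + 1))) =
      (1 - X ^ ℓ) ^ (2 * a) := by
    have hre : Pexp * ((1 - X) * (∏ j ∈ Finset.Icc 2 a, (1 - X ^ j) ^ 2) * (1 - X ^ (a + 1)))
        = ((1 - X) * gg ℓ 1) * (∏ j ∈ Finset.Icc 2 a, ((1 - X ^ j) * gg ℓ j) ^ 2)
          * ((1 - X ^ (a + 1)) * gg ℓ (a + 1)) := by
      rw [hPexp]
      have : (∏ j ∈ Finset.Icc 2 a, ((1 - (X:ℚ[X]) ^ j) * gg ℓ j) ^ 2)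
          = (∏ j ∈ Finset.Icc 2 a, (1 - (X:ℚ[X]) ^ j) ^ 2) * ∏ j ∈ Finset.Icc 2 a, (gg ℓ j) ^ 2 := by
        rw [← Finset.prod_mul_distrib]
        exact Finset.prod_congr rfl fun j _ => mul_pow _ _ _
      rw [this]; ring
    rw [hre, show (1 - (X:ℚ[X])) = 1 - X ^ 1 by rw [pow_one], gg_mul ℓ 1 hd1, gg_mul ℓ (a+1) hda1,
      Finset.prod_congr rfl (fun j hj => by rw [gg_mul ℓ j (hdj j hj)]),
      Finset.prod_const, Nat.card_Icc]
    rw [← pow_mul, show 2 * a = 1 + 2 * (a + 1 - 2) + 1 by omega, pow_add, pow_add, pow_one]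
  have hPP : P = Pexp := mul_right_cancel₀ hD (hP.trans key.symm)
  constructor
  · intro i
    rw [hPP, hPexp]
    refine mul_coeff_nonneg (mul_coeff_nonneg (gg_coeff_nonneg ℓ 1) ?_) (gg_coeff_nonneg ℓ (a+1)) i
    exact prod_coeff_nonneg fun j _ => fun i => by
      rw [sq]; exact mul_coeff_nonneg (gg_coeff_nonneg ℓ j) (gg_coeff_nonneg ℓ j) i
  · -- palindrome
    have hdeg1 : (gg ℓ 1).natDegree ≤ ℓ - 1 := gg_natDegree_le ℓ 1 one_pos hd1
    have hdegj : ∀ j ∈ Finset.Icc 2 a, ((gg ℓ j) ^ 2).natDegree ≤ 2 * (ℓ - j) := by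
      intro j hj
      rw [Finset.mem_Icc] at hj
      exact natDegree_pow_le.trans (by
        have := gg_natDegree_le ℓ j (by omega) (hdj j (Finset.mem_Icc.2 hj))
        omega)
    have hdega : (gg ℓ (a+1)).natDegree ≤ ℓ - (a + 1) :=
      gg_natDegree_le ℓ (a+1) (by omega) hda1
    have hdegprod : (∏ j ∈ Finset.Icc 2 a, (gg ℓ j) ^ 2).natDegree
        ≤ ∑ j ∈ Finset.Icc 2 a, 2 * (ℓ - j) :=
      (natDegree_prod_le _ _).trans (Finset.sum_le_sum hdegj)
    have hrefl_sq : ∀ j ∈ Finset.Icc 2 a, reflect (2 * (ℓ - j)) ((gg ℓ j) ^ 2) = (gg ℓ j) ^ 2 := by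
      intro j hj
      rw [Finset.mem_Icc] at hj
      have hg := gg_reflect ℓ j (by omega) (hdj j (Finset.mem_Icc.2 hj))
      have hgd := gg_natDegree_le ℓ j (by omega) (hdj j (Finset.mem_Icc.2 hj))
      rw [sq, two_mul, reflect_mul _ _ hgd hgd, hg, ← sq]
    have hreflprod : reflect (∑ j ∈ Finset.Icc 2 a, 2 * (ℓ - j))
        (∏ j ∈ Finset.Icc 2 a, (gg ℓ j) ^ 2) = ∏ j ∈ Finset.Icc 2 a, (gg ℓ j) ^ 2 := by
      rw [reflect_prod _ _ hdegj]
      exact Finset.prod_congr rfl hrefl_sq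
    set S := ∑ j ∈ Finset.Icc 2 a, 2 * (ℓ - j) with hS
    have hrefl : reflect ((ℓ - 1) + S + (ℓ - (a + 1))) Pexp = Pexp := by
      rw [hPexp,
        reflect_mul _ _ (natDegree_mul_le.trans (add_le_add hdeg1 hdegprod)) hdega,
        reflect_mul _ _ hdeg1 hdegprod,
        gg_reflect ℓ 1 one_pos hd1, hreflprod, gg_reflect ℓ (a+1) (by omega) hda1]
    -- degree arithmetic
    have hSle : ∀ j ∈ Finset.Icc 2 a, j ≤ ℓ := fun j hj => by
      rw [Finset.mem_Icc] at hj; omega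
    have hsum : (ℓ - 1) + S + (ℓ - (a + 1)) = 2 * ℓ * a - a * (a + 2) := by
      have key2 : ∀ b : ℕ, b ≤ a → (∑ j ∈ Finset.Icc 2 b, 2 * (ℓ - j)) + (b * (b + 1) - 2)
          = 2 * ℓ * (b - 1) ∨ b ≤ 1 ∧ (∑ j ∈ Finset.Icc 2 b, 2 * (ℓ - j)) = 0 := by
        intro b hb
        induction b with
        | zero => right; simp
        | succ n ih =>
          rcases Nat.lt_or_ge (n + 1) 2 with h | h
          · right
            constructor
            · omega
            · have : Finset.Icc 2 (n+1) = ∅ := by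
                apply Finset.Icc_eq_empty; omega
              rw [this]; simp
          · left
            have hsing : Finset.Icc 2 (n + 1) = insert (n+1) (Finset.Icc 2 n) := by
              exact (Finset.insert_Icc_right_eq_Icc_add_one (by omega)).symm
            rw [hsing, Finset.sum_insert (by simp)]
            have hln : n + 1 ≤ ℓ := by omega
            rcases ih (by omega) with h1 | h1
            · have hn1 : 1 ≤ n := by
                by_contra hc
                push_neg at hc
                interval_cases n <;> simp_all
              have e1 : 2 * ℓ * (n + 1 - 1) = 2 * ℓ * (n - 1) + 2 * ℓ := by
                have h3 : n + 1 - 1 = (n - 1) + 1 := by omega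
                rw [h3, mul_add, mul_one]
              have e2 : (n+1)*(n+1+1) = n*(n+1) + 2*(n+1) := by ring
              have e3 : 2 ≤ n * (n + 1) := by nlinarith
              omega
            · obtain ⟨hn1, hz⟩ := h1
              rw [hz]
              interval_cases n <;> omega
      rcases key2 a le_rfl with h | h
      · rw [hS]
        have ha2 : 2 ≤ a * (a + 1) := by nlinarith
        have e1 : 2 * ℓ * a = 2 * ℓ * (a - 1) + 2 * ℓ := by
          cases a with
          | zero => omega
          | succ n => rw [Nat.succ_sub_one, Nat.mul_succ]
        have e2 : a * (a + 2) = a * (a + 1) + a := by ring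
        omega
      · obtain ⟨h1, h2⟩ := h
        have : a = 1 := by omega
        subst this
        rw [hS, h2]
        omega
    intro i hi
    rw [hPP, ← hsum] at *
    conv_lhs => rw [← hrefl]
    rw [coeff_reflect, revAt_le hi]
end

section
/- For all k ≡ 0 mod 6, the number of plane partitions of k fitting inside a 2 × 2 rectangle equals k³/72 + k²/6 + 2k/3 + 1. -/
open Finset in
/-- Pairs `(p, w)` with `3p + 4w ≤ K`. -/
private def Lset (K : ℕ) : Finset (ℕ × ℕ) :=
  (range (K+1) ×ˢ range (K+1)).filter fun p => 3*p.1 + 4*p.2 ≤ K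

open Finset in
/-- Triples `(q, r, w)` with `3q + 2r + 4w ≤ K`. -/
private def A4set (K : ℕ) : Finset (ℕ × ℕ × ℕ) :=
  (range (K+1) ×ˢ range (K+1) ×ˢ range (K+1)).filter
    fun p => 3*p.1 + 2*p.2.1 + 4*p.2.2 ≤ K

open Finset in
/-- Quadruples `(a, b, c, d)` forming a plane partition of `K` in a `2 × 2` box. -/
private def Nset (K : ℕ) : Finset (ℕ × ℕ × ℕ × ℕ) :=
  (range (K+1) ×ˢ range (K+1) ×ˢ range (K+1) ×ˢ range (K+1)).filter
    fun x => x.2.1 ≤ x.1 ∧ x.2.2.1 ≤ x.1 ∧ x.2.2.2 ≤ x.2.1 ∧ x.2.2.2 ≤ x.2.2.1 ∧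
      x.1 + x.2.1 + x.2.2.1 + x.2.2.2 = K

open Finset

private lemma mem_Lset {K : ℕ} {p : ℕ × ℕ} : p ∈ Lset K ↔ 3*p.1 + 4*p.2 ≤ K := by
  simp only [Lset, mem_filter, mem_product, mem_range]; omega

private lemma mem_A4set {K : ℕ} {p : ℕ × ℕ × ℕ} :
    p ∈ A4set K ↔ 3*p.1 + 2*p.2.1 + 4*p.2.2 ≤ K := by
  simp only [A4set, mem_filter, mem_product, mem_range]; omega

private lemma mem_Nset {K : ℕ} {x : ℕ × ℕ × ℕ × ℕ} :
    x ∈ Nset K ↔ x.2.1 ≤ x.1 ∧ x.2.2.1 ≤ x.1 ∧ x.2.2.2 ≤ x.2.1 ∧ x.2.2.2 ≤ x.2.2.1 ∧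
      x.1 + x.2.1 + x.2.2.1 + x.2.2.2 = K := by
  simp only [Nset, mem_filter, mem_product, mem_range]; omega

private lemma A4_r0 (K : ℕ) :
    ((A4set K).filter fun p => p.2.1 = 0).card = (Lset K).card := by
  apply Finset.card_nbij' (i := fun p => (p.1, p.2.2)) (j := fun q => (q.1, 0, q.2))
  · intro p hp
    simp only [mem_coe, mem_filter, mem_A4set] at hp
    simp only [mem_coe, mem_Lset]
    omega
  · intro q hq
    simp only [mem_coe, mem_Lset] at hq
    simp [mem_filter, mem_A4set]
    omega
  · intro p hp
    simp only [mem_coe, mem_filter] at hp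
    obtain ⟨p1, p2, p3⟩ := p
    simp at hp ⊢
    omega
  · intro q _
    rfl

private lemma A4_rec (K : ℕ) :
    (A4set (K+2)).card = (A4set K).card + (Lset (K+2)).card := by
  have h := Finset.card_filter_add_card_filter_not
    (s := A4set (K+2)) (p := fun p => p.2.1 = 0)
  have h1 : ((A4set (K+2)).filter fun p => ¬ p.2.1 = 0).card = (A4set K).card := by
    apply Finset.card_nbij' (i := fun p => (p.1, p.2.1 - 1, p.2.2))
      (j := fun p => (p.1, p.2.1 + 1, p.2.2))
    · intro p hp
      simp only [mem_coe, mem_filter, mem_A4set] at hp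
      simp only [mem_coe, mem_A4set]
      omega
    · intro p hp
      simp only [mem_coe, mem_A4set] at hp
      simp [mem_filter, mem_A4set]
      omega
    · intro p hp
      simp only [mem_coe, mem_filter] at hp
      obtain ⟨p1, p2, p3⟩ := p
      simp at hp ⊢
      omega
    · intro p _
      rfl
  rw [A4_r0] at h
  omega

private lemma L_rec (K : ℕ) :
    (Lset (K+3)).card = (Lset K).card + ((K+3)/4 + 1) := by
  have h := Finset.card_filter_add_card_filter_not
    (s := Lset (K+3)) (p := fun p => p.1 = 0)
  have h0 : ((Lset (K+3)).filter fun p => p.1 = 0).card = (K+3)/4 + 1 := by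
    rw [show ((K+3)/4 + 1) = (range ((K+3)/4 + 1)).card by simp]
    apply Finset.card_nbij' (i := fun p => p.2) (j := fun w => (0, w))
    · intro p hp
      simp only [mem_coe, mem_filter, mem_Lset] at hp
      simp only [mem_coe, mem_range]
      omega
    · intro w hw
      simp only [mem_coe, mem_range] at hw
      simp [mem_filter, mem_Lset]
      omega
    · intro p hp
      simp only [mem_coe, mem_filter] at hp
      obtain ⟨p1, p2⟩ := p
      simp at hp ⊢
      omega
    · intro w _
      rfl
  have h1 : ((Lset (K+3)).filter fun p => ¬ p.1 = 0).card = (Lset K).card := by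
    apply Finset.card_nbij' (i := fun p => (p.1 - 1, p.2))
      (j := fun p => (p.1 + 1, p.2))
    · intro p hp
      simp only [mem_coe, mem_filter, mem_Lset] at hp
      simp only [mem_coe, mem_Lset]
      omega
    · intro p hp
      simp only [mem_coe, mem_Lset] at hp
      simp [mem_filter, mem_Lset]
      omega
    · intro p hp
      simp only [mem_coe, mem_filter] at hp
      obtain ⟨p1, p2⟩ := p
      simp at hp ⊢
      omega
    · intro p _
      rfl
  omega

private def cL (n : ℕ) : ℕ :=
  if n = 0 then 24 else if n = 1 then 4 else if n = 2 then 24 else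
  if n = 3 then 12 else if n = 4 then 16 else 12

private lemma F_L : ∀ s : ℕ, 24 * (Lset (2*s)).card = 4*(s*s) + 16*s + cL (s % 6) := by
  intro s
  induction s using Nat.strong_induction_on with
  | _ s ih =>
    rcases Nat.lt_or_ge s 3 with hs | hs
    · interval_cases s <;> decide
    · obtain ⟨t, rfl⟩ : ∃ t, s = t + 3 := ⟨s - 3, by omega⟩
      have h1 := L_rec (2*t)
      have h2 := L_rec (2*t + 3)
      have h3 := ih t (by omega)
      have e1 : 2*(t+3) = 2*t + 3 + 3 := by ring
      rw [e1]
      have e2 : (t+3)*(t+3) = t*t + 6*t + 9 := by ring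
      rw [e2]
      simp only [cL] at h3 ⊢
      split_ifs at h3 ⊢ <;> omega

private def cA (n : ℕ) : ℕ := if n = 0 then 144 else 108

private lemma F_A4 : ∀ m : ℕ, 144 * (A4set (6*m)).card
    = 216*(m*m*m) + 540*(m*m) + 432*m + cA (m % 2) := by
  intro m
  induction m with
  | zero => decide
  | succ m ih =>
    have h1 := A4_rec (6*m)
    have h2 := A4_rec (6*m+2)
    have h3 := A4_rec (6*m+4)
    rw [show 6*m+2+2 = 6*m+4 by ring] at h2
    rw [show 6*m+4+2 = 6*(m+1) by ring] at h3
    have hL1 := F_L (3*m+1)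
    have hL2 := F_L (3*m+2)
    have hL3 := F_L (3*m+3)
    rw [show 2*(3*m+1) = 6*m+2 by ring] at hL1
    rw [show 2*(3*m+2) = 6*m+4 by ring] at hL2
    rw [show 2*(3*m+3) = 6*(m+1) by ring] at hL3
    rcases Nat.even_or_odd m with ⟨t, rfl⟩ | ⟨t, rfl⟩
    · rw [show (3*(t+t)+1) % 6 = 1 by omega] at hL1
      rw [show (3*(t+t)+2) % 6 = 2 by omega] at hL2
      rw [show (3*(t+t)+3) % 6 = 3 by omega] at hL3
      rw [show (t+t) % 2 = 0 by omega] at ih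
      rw [show (t+t+1) % 2 = 1 by omega]
      norm_num [cL] at hL1 hL2 hL3
      norm_num [cA] at ih ⊢
      rw [show (t+t+1)*(t+t+1)*(t+t+1) = 8*(t*t*t)+12*(t*t)+6*t+1 by ring,
        show (t+t+1)*(t+t+1) = 4*(t*t)+4*t+1 by ring]
      rw [show (3*(t+t)+1)*(3*(t+t)+1) = 36*(t*t)+12*t+1 by ring] at hL1
      rw [show (3*(t+t)+2)*(3*(t+t)+2) = 36*(t*t)+24*t+4 by ring] at hL2
      rw [show (3*(t+t)+3)*(3*(t+t)+3) = 36*(t*t)+36*t+9 by ring] at hL3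
      rw [show (t+t)*(t+t)*(t+t) = 8*(t*t*t) by ring,
        show (t+t)*(t+t) = 4*(t*t) by ring] at ih
      omega
    · rw [show (3*(2*t+1)+1) % 6 = 4 by omega] at hL1
      rw [show (3*(2*t+1)+2) % 6 = 5 by omega] at hL2
      rw [show (3*(2*t+1)+3) % 6 = 0 by omega] at hL3
      rw [show (2*t+1) % 2 = 1 by omega] at ih
      rw [show (2*t+1+1) % 2 = 0 by omega]
      norm_num [cL] at hL1 hL2 hL3
      norm_num [cA] at ih ⊢
      rw [show (2*t+1+1)*(2*t+1+1)*(2*t+1+1) = 8*(t*t*t)+24*(t*t)+24*t+8 by ring,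
        show (2*t+1+1)*(2*t+1+1) = 4*(t*t)+8*t+4 by ring]
      rw [show (3*(2*t+1)+1)*(3*(2*t+1)+1) = 36*(t*t)+48*t+16 by ring] at hL1
      rw [show (3*(2*t+1)+2)*(3*(2*t+1)+2) = 36*(t*t)+60*t+25 by ring] at hL2
      rw [show (3*(2*t+1)+3)*(3*(2*t+1)+3) = 36*(t*t)+72*t+36 by ring] at hL3
      rw [show (2*t+1)*(2*t+1)*(2*t+1) = 8*(t*t*t)+12*(t*t)+6*t+1 by ring,
        show (2*t+1)*(2*t+1) = 4*(t*t)+4*t+1 by ring] at ih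
      omega

private lemma bij1 (K : ℕ) :
    ((Nset K).filter fun x => x.2.2.1 ≤ x.2.1).card = (A4set K).card := by
  apply Finset.card_nbij'
    (i := fun x => (x.2.2.1 - x.2.2.2, x.2.1 - x.2.2.1, x.2.2.2))
    (j := fun p => (K - (2*p.1 + p.2.1 + 3*p.2.2), p.1 + p.2.1 + p.2.2, p.1 + p.2.2, p.2.2))
  · intro x hx
    simp only [mem_coe, mem_filter, mem_Nset] at hx
    simp only [mem_coe, mem_A4set]
    omega
  · intro p hp
    simp only [mem_coe, mem_A4set] at hp
    simp [mem_filter, mem_Nset]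
    omega
  · intro x hx
    simp only [mem_coe, mem_filter, mem_Nset] at hx
    obtain ⟨a, b, c, d⟩ := x
    simp at hx ⊢
    omega
  · intro p hp
    simp only [mem_coe, mem_A4set] at hp
    obtain ⟨q, r, w⟩ := p
    simp at hp ⊢
    omega

private lemma bij2 (K : ℕ) :
    ((Nset K).filter fun x => ¬ x.2.2.1 ≤ x.2.1).card
      = ((A4set K).filter fun p => ¬ p.2.1 = 0).card := by
  apply Finset.card_nbij'
    (i := fun x => (x.2.1 - x.2.2.2, x.2.2.1 - x.2.1, x.2.2.2))
    (j := fun p => (K - (2*p.1 + p.2.1 + 3*p.2.2), p.1 + p.2.2, p.1 + p.2.1 + p.2.2, p.2.2))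
  · intro x hx
    simp only [mem_coe, mem_filter, mem_Nset] at hx
    simp only [mem_coe, mem_filter, mem_A4set]
    omega
  · intro p hp
    simp only [mem_coe, mem_filter, mem_A4set] at hp
    simp [mem_filter, mem_Nset]
    omega
  · intro x hx
    simp only [mem_coe, mem_filter, mem_Nset] at hx
    obtain ⟨a, b, c, d⟩ := x
    simp at hx ⊢
    omega
  · intro p hp
    simp only [mem_coe, mem_filter, mem_A4set] at hp
    obtain ⟨q, r, w⟩ := p
    simp at hp ⊢
    omega

private lemma N_L_A4 (K : ℕ) :
    (Nset K).card + (Lset K).card = 2 * (A4set K).card := by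
  have hN := Finset.card_filter_add_card_filter_not
    (s := Nset K) (p := fun x => x.2.2.1 ≤ x.2.1)
  have hA := Finset.card_filter_add_card_filter_not
    (s := A4set K) (p := fun p => p.2.1 = 0)
  have h0 := A4_r0 K
  have h1 := bij1 K
  have h2 := bij2 K
  omega

private lemma ppc_eq (K : ℕ) : planePartitionCount 2 K = (Nset K).card := by
  rw [planePartitionCount, ← Nat.card_eq_finsetCard]
  apply Nat.card_congr
  refine ⟨fun f => ⟨(f.1 0 0, f.1 0 1, f.1 1 0, f.1 1 1), ?_⟩,
          fun x => ⟨![![x.1.1, x.1.2.1], ![x.1.2.2.1, x.1.2.2.2]], ?_⟩, ?_, ?_⟩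
  · obtain ⟨f, h1, h2, h3⟩ := f
    simp only [Fin.sum_univ_two] at h3
    simp only [mem_Nset]
    exact ⟨h1 0 0 1 (by decide), h2 0, h2 1, h1 1 0 1 (by decide), by omega⟩
  · obtain ⟨⟨a, b, c, d⟩, hx⟩ := x
    simp only [mem_Nset] at hx
    refine ⟨?_, ?_, ?_⟩
    · intro i j j' hjj'
      fin_cases i <;> fin_cases j <;> fin_cases j' <;> simp_all
    · intro j
      fin_cases j <;> simp <;> omega
    · simp [Fin.sum_univ_two]
      omega
  · intro f
    apply Subtype.ext
    funext i j
    fin_cases i <;> fin_cases j <;> simp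
  · intro x
    apply Subtype.ext
    obtain ⟨⟨a, b, c, d⟩, hx⟩ := x
    simp

private lemma N_formula (m : ℕ) :
    144 * (Nset (6*m)).card = 432*(m*m*m) + 864*(m*m) + 576*m + 144 := by
  have h1 := N_L_A4 (6*m)
  have h2 := F_A4 m
  have h3 := F_L (3*m)
  rw [show 2*(3*m) = 6*m by ring] at h3
  rw [show (3*m)*(3*m) = 9*(m*m) by ring] at h3
  rcases Nat.even_or_odd m with ⟨t, rfl⟩ | ⟨t, rfl⟩
  · rw [show (3*(t+t)) % 6 = 0 by omega] at h3
    rw [show (t+t) % 2 = 0 by omega] at h2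
    norm_num [cL] at h3
    norm_num [cA] at h2
    omega
  · rw [show (3*(2*t+1)) % 6 = 3 by omega] at h3
    rw [show (2*t+1) % 2 = 1 by omega] at h2
    norm_num [cL] at h3
    norm_num [cA] at h2
    omega

theorem planePartitionCount_two_two_mod_zero (k : ℕ) (hk : k % 6 = 0) :
    (planePartitionCount 2 k : ℚ) =
      (k : ℚ) ^ 3 / 72 + (k : ℚ) ^ 2 / 6 + 2 * (k : ℚ) / 3 + 1 := by
  obtain ⟨m, rfl⟩ : ∃ m, k = 6*m := ⟨k / 6, by omega⟩
  rw [ppc_eq]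
  have hNat := N_formula m
  have hq : (144 : ℚ) * ((Nset (6*m)).card : ℚ)
      = 432*((m:ℚ)*(m:ℚ)*(m:ℚ)) + 864*((m:ℚ)*(m:ℚ)) + 576*(m:ℚ) + 144 := by
    exact_mod_cast congrArg (fun n : ℕ => (n : ℚ)) hNat
  have h144 : (144 : ℚ) ≠ 0 := by norm_num
  have hcard : ((Nset (6*m)).card : ℚ)
      = (432*((m:ℚ)*(m:ℚ)*(m:ℚ)) + 864*((m:ℚ)*(m:ℚ)) + 576*(m:ℚ) + 144) / 144 := by
    rw [eq_div_iff h144]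
    linarith [hq]
  rw [hcard]
  push_cast
  ring
end

section
/- The number of quadruples (a,b,c,d) of nonnegative integers with a ≥ b ≥ d, a ≥ c ≥ d and a+b+c+d = k equals the number of coloured partitions of k with parts in {1, 2, 2̄, 3}: i.e., the number of solutions in nonnegative integers of m₁ + 2m₂ + 2m₂' + 3m₃ = k. -/
theorem planePartition_box_two_two_eq_colouredCount (k : ℕ) :
    Nat.card {q : ℕ × ℕ × ℕ × ℕ //
        q.2.1 ≤ q.1 ∧ q.2.2.1 ≤ q.1 ∧ q.2.2.2 ≤ q.2.1 ∧ q.2.2.2 ≤ q.2.2.1 ∧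
        q.1 + q.2.1 + q.2.2.1 + q.2.2.2 = k} =
      Nat.card {m : ℕ × ℕ × ℕ × ℕ //
        m.1 + 2 * m.2.1 + 2 * m.2.2.1 + 3 * m.2.2.2 = k} := by
  refine Nat.card_congr ⟨
    fun ⟨⟨a, b, c, d⟩, h⟩ =>
      if hc : b + c ≤ a + d then
        ⟨(a + 2 * d - (b + c), b - d, c - d, d), by simp only at h ⊢; omega⟩
      else
        ⟨(d, a - c, a - b, b + c - a), by simp only at h ⊢; omega⟩,
    fun ⟨⟨m1, m2, m2', m3⟩, h⟩ =>
      ⟨(m2 + m2' + max m1 m3, m2 + m3, m2' + m3, min m1 m3), by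
        simp only at h ⊢
        refine ⟨?_, ?_, ?_, ?_, ?_⟩ <;> omega⟩,
    fun ⟨⟨a, b, c, d⟩, h⟩ => by
      simp only at h
      obtain ⟨h1, h2, h3, h4, h5⟩ := h
      dsimp only
      split_ifs with hc <;>
        · apply Subtype.ext
          simp only [Prod.mk.injEq]
          refine ⟨?_, ?_, ?_, ?_⟩ <;> omega,
    fun ⟨⟨m1, m2, m2', m3⟩, h⟩ => by
      simp only at h
      dsimp only
      split_ifs with hc <;>
        · apply Subtype.ext
          simp only [Prod.mk.injEq]
          refine ⟨?_, ?_, ?_, ?_⟩ <;> omega⟩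
end
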